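/- arXiv:1206.4523 — 7 statements merged into one kernel-verified Lean document; each statement's English description precedes it below -/
import Mathlib

section
/- Let (R, m) be a commutative Noetherian local ring and let M be a complete R-module. Then the intersection of all associated primes of M equals the radical of the annihilator of M, i.e. ⋂ Ass(M) = √(Ann_R(M)). -/
open IsLocalRing TensorProduct

universe u v w x

open Submodule in
lemma aux_locally_nilpotent {R : Type u} [CommRing R] [IsNoetherianRing R]
    {M : Type v} [AddCommGroup M] [Module R M]
    {x : R} (hx : ∀ p ∈ associatedPrimes R M, x ∈ p) (m : M) :
    ∃ n : ℕ, x ^ n • m = 0 := by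
  classical
  set N : Submodule R M := R ∙ m with hN
  haveI : IsNoetherian R ↥N := isNoetherian_of_fg_of_noetherian N (Submodule.fg_span_singleton m)
  set K : ℕ → Submodule R ↥N := fun j => LinearMap.ker (LinearMap.lsmul R ↥N (x ^ j)) with hK
  have hKmem : ∀ j (y : ↥N), y ∈ K j ↔ x ^ j • y = 0 := by
    intro j y
    simp [hK, LinearMap.mem_ker]
  have hKmono : Monotone K := by
    intro a b hab y hy
    obtain ⟨d, rfl⟩ := Nat.exists_eq_add_of_le hab
    rw [hKmem] at hy ⊢
    rw [add_comm, pow_add, mul_smul, hy, smul_zero]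
  obtain ⟨k, hk⟩ := (monotone_stabilizes_iff_noetherian.mpr inferInstance) ⟨K, hKmono⟩
  by_cases hT : K k = ⊤
  · refine ⟨k, ?_⟩
    have hmm : (⟨m, Submodule.mem_span_singleton_self m⟩ : ↥N) ∈ K k := hT ▸ Submodule.mem_top
    rw [hKmem] at hmm
    have := congrArg (Subtype.val) hmm
    simpa using this
  · exfalso
    haveI : Nontrivial (↥N ⧸ K k) :=
      Submodule.Quotient.nontrivial_iff.mpr hT
    obtain ⟨p, hp⟩ := associatedPrimes.nonempty R (↥N ⧸ K k)
    obtain ⟨hprime, y, hy⟩ := isAssociatedPrime_iff.mp hp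
    obtain ⟨w, rfl⟩ := Submodule.Quotient.mk_surjective (K k) y
    have hy0 : (Submodule.Quotient.mk w : ↥N ⧸ K k) ≠ 0 := by
      intro h0
      apply hprime.ne_top
      rw [hy, h0, Ideal.eq_top_iff_one, Submodule.mem_colon_singleton, Submodule.mem_bot, smul_zero]
    have hxp : x ∉ p := by
      intro hxmem
      apply hy0
      rw [hy, Submodule.mem_colon_singleton, Submodule.mem_bot, ← Submodule.Quotient.mk_smul,
        Submodule.Quotient.mk_eq_zero, hKmem] at hxmem
      have h2 : w ∈ K (k + 1) := by
        rw [hKmem, pow_succ, mul_smul, hxmem]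
      have hk' : K k = K (k + 1) := hk (k + 1) (Nat.le_succ k)
      rw [← hk'] at h2
      exact (Submodule.Quotient.mk_eq_zero _).mpr h2
    have hxkp : x ^ k ∉ p := fun h => hxp (hprime.mem_of_pow_mem k h)
    have hpz : IsAssociatedPrime p ↥N := by
      refine isAssociatedPrime_iff.mpr ⟨hprime, x ^ k • w, ?_⟩
      ext r
      rw [Submodule.mem_colon_singleton, Submodule.mem_bot]
      constructor
      · intro hr
        rw [hy, Submodule.mem_colon_singleton, Submodule.mem_bot, ← Submodule.Quotient.mk_smul,
          Submodule.Quotient.mk_eq_zero, hKmem] at hr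
        rw [smul_comm]
        exact hr
      · intro hr
        have h1 : r * x ^ k ∈ p := by
          rw [hy, Submodule.mem_colon_singleton, Submodule.mem_bot, ← Submodule.Quotient.mk_smul,
            Submodule.Quotient.mk_eq_zero]
          have : (r * x ^ k) • w = 0 := by rw [mul_smul]; exact hr
          rw [this]
          exact zero_mem _
        rcases hprime.mul_mem_iff_mem_or_mem.mp h1 with h | h
        · exact h
        · exact absurd h hxkp
    have hmemM : p ∈ associatedPrimes R M :=
      associatedPrimes.subset_of_injective (f := N.subtype) (Submodule.injective_subtype N) hpz
    exact hxp (hx p hmemM)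
lemma aux_nilpotent_of_locally_nilpotent {R : Type u} [CommRing R] {M : Type v}
    [AddCommGroup M] [Module R M] {I : Ideal R} [IsAdicComplete I M]
    {x : R} (hxI : x ∈ I) (h : ∀ m : M, ∃ n : ℕ, x ^ n • m = 0) :
    ∃ n : ℕ, ∀ m : M, x ^ n • m = 0 := by
  classical
  by_contra hcon
  push_neg at hcon
  -- witnesses of non-nilpotence
  set u : ℕ → M := fun n => (hcon n).choose with hu_def
  have hu : ∀ n, x ^ n • u n ≠ 0 := fun n => (hcon n).choose_spec
  -- Hausdorff: nonzero elements escape some power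
  have haus : ∀ y : M, y ≠ 0 → ∃ j, y ∉ (I ^ j • ⊤ : Submodule R M) := by
    intro y hy
    by_contra hj
    push_neg at hj
    exact hy (IsHausdorff.haus (inferInstance : IsHausdorff I M) y
      fun n => SModEq.zero.mpr (hj n))
  set jw : M → ℕ := fun y =>
    if h : ∃ j, y ∉ (I ^ j • ⊤ : Submodule R M) then h.choose else 0 with hjw_def
  have jw_spec : ∀ y : M, y ≠ 0 → y ∉ (I ^ (jw y) • ⊤ : Submodule R M) := by
    intro y hy
    have hex := haus y hy
    simp only [hjw_def, dif_pos hex]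
    exact hex.choose_spec
  have hanti : ∀ {a b : ℕ}, a ≤ b → (I ^ b • ⊤ : Submodule R M) ≤ I ^ a • ⊤ :=
    fun hab => Submodule.smul_mono_left (Ideal.pow_le_pow_right hab)
  have hxpow : ∀ (c : ℕ) (y : M), x ^ c • y ∈ (I ^ c • ⊤ : Submodule R M) :=
    fun c y => Submodule.smul_mem_smul (Ideal.pow_mem_pow hxI c) Submodule.mem_top
  -- the recursive construction
  let step : ℕ → M × ℕ × ℕ → M × ℕ × ℕ := fun k st =>
    let c' := max (max st.2.1 st.2.2) k + 1
    let s' := if x ^ (k + 1) • st.1 = 0 then st.1 + x ^ c' • u (k + 1 + c') else st.1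
    (s', c', max st.2.2 (jw (x ^ (k + 1) • s')))
  let g : ℕ → M × ℕ × ℕ := fun k => Nat.rec (u 0, 0, jw (x ^ 0 • u 0)) step k
  set s : ℕ → M := fun k => (g k).1 with hs_def
  set c : ℕ → ℕ := fun k => (g k).2.1 with hc_def
  set J : ℕ → ℕ := fun k => (g k).2.2 with hJ_def
  have hc_succ : ∀ k, c (k + 1) = max (max (c k) (J k)) k + 1 := fun k => rfl
  have hs_succ : ∀ k, s (k + 1) =
      if x ^ (k + 1) • s k = 0 then s k + x ^ (c (k + 1)) • u (k + 1 + c (k + 1)) else s k :=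
    fun k => rfl
  have hJ_succ : ∀ k, J (k + 1) = max (J k) (jw (x ^ (k + 1) • s (k + 1))) := fun k => rfl
  have hs0 : s 0 = u 0 := rfl
  have hJ0 : J 0 = jw (x ^ 0 • u 0) := rfl
  have hJmono : Monotone J :=
    monotone_nat_of_le_succ (fun k => by rw [hJ_succ]; exact le_max_left _ _)
  -- the increments are deep
  have hd : ∀ k, s (k + 1) - s k ∈ (I ^ (c (k + 1)) • ⊤ : Submodule R M) := by
    intro k
    rw [hs_succ k]
    by_cases h0 : x ^ (k + 1) • s k = 0
    · rw [if_pos h0, add_sub_cancel_left]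
      exact hxpow _ _
    · rw [if_neg h0, sub_self]
      exact Submodule.zero_mem _
  have hc_ge : ∀ k, k + 1 ≤ c (k + 1) := by
    intro k
    rw [hc_succ]
    exact Nat.succ_le_succ (le_max_right _ _)
  have hcJ : ∀ k, J k < c (k + 1) := by
    intro k
    rw [hc_succ]
    exact Nat.lt_succ_of_le (le_trans (le_max_right _ _) (le_max_left _ _))
  -- nonvanishing along the construction
  have hne : ∀ k, x ^ (k + 1) • s (k + 1) ≠ 0 := by
    intro k
    rw [hs_succ k]
    by_cases h0 : x ^ (k + 1) • s k = 0
    · rw [if_pos h0, smul_add, h0, zero_add, smul_smul, ← pow_add]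
      exact hu (k + 1 + c (k + 1))
    · rw [if_neg h0]
      exact h0
  -- main invariant
  have INV : ∀ k, ∀ N, N ≤ k → x ^ N • s k ∉ (I ^ (J N) • ⊤ : Submodule R M) := by
    intro k
    induction k with
    | zero =>
      intro N hN
      interval_cases N
      rw [hs0, hJ0]
      exact jw_spec _ (hu 0)
    | succ k ih =>
      intro N hN
      rcases Nat.lt_or_ge N (k + 1) with hlt | hge
      · -- N ≤ k : use the induction hypothesis
        have hNk : N ≤ k := Nat.lt_succ_iff.mp hlt
        intro hmem
        apply ih N hNk
        have hdiff : x ^ N • s (k + 1) - x ^ N • s k ∈ (I ^ (J N) • ⊤ : Submodule R M) := by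
          rw [← smul_sub]
          refine hanti ?_ (Submodule.smul_mem _ _ (hd k))
          exact le_of_lt (lt_of_le_of_lt (hJmono hNk) (hcJ k))
        have := Submodule.sub_mem _ hmem hdiff
        rwa [sub_sub_cancel] at this
      · -- N = k + 1
        have hNe : N = k + 1 := le_antisymm hN hge
        subst hNe
        intro hmem
        have hj := jw_spec _ (hne k)
        apply hj
        refine hanti ?_ hmem
        rw [hJ_succ]
        exact le_max_right _ _
  -- Cauchy
  have hCauchy : ∀ a b : ℕ, a ≤ b → s b - s a ∈ (I ^ a • ⊤ : Submodule R M) := by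
    intro a b hab
    induction b, hab using Nat.le_induction with
    | base => rw [sub_self]; exact Submodule.zero_mem _
    | succ b hab ih =>
      have h1 : s (b + 1) - s b ∈ (I ^ a • ⊤ : Submodule R M) :=
        hanti (le_trans (Nat.le_succ_of_le hab) (hc_ge b)) (hd b)
      have := Submodule.add_mem _ h1 ih
      rwa [sub_add_sub_cancel] at this
  -- limit
  obtain ⟨L, hL⟩ := IsPrecomplete.prec (inferInstance : IsPrecomplete I M)
    (f := s) (fun {a b} hab => SModEq.sub_mem.mpr (by
      have := Submodule.neg_mem _ (hCauchy a b hab)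
      rwa [neg_sub] at this))
  obtain ⟨n, hn⟩ := h L
  have hinv := INV (max n (J n)) n (le_max_left _ _)
  apply hinv
  have h1 : s (max n (J n)) - L ∈ (I ^ (max n (J n)) • ⊤ : Submodule R M) :=
    SModEq.sub_mem.mp (hL (max n (J n)))
  have h2 : x ^ n • (s (max n (J n)) - L) ∈ (I ^ (max n (J n)) • ⊤ : Submodule R M) :=
    Submodule.smul_mem _ _ h1
  have h3 : x ^ n • s (max n (J n)) = x ^ n • (s (max n (J n)) - L) := by
    rw [smul_sub, hn, sub_zero]
  rw [h3]
  exact hanti (le_max_right _ _) h2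
theorem inf_associatedPrimes_eq_radical_annihilator
    (R : Type u) [CommRing R] [IsNoetherianRing R] [IsLocalRing R]
    (M : Type v) [AddCommGroup M] [Module R M]
    [IsAdicComplete (maximalIdeal R) M] :
    sInf (associatedPrimes R M) = (Module.annihilator R M).radical := by
  apply le_antisymm
  · intro x hx
    have hx' : ∀ p ∈ associatedPrimes R M, x ∈ p := fun p hp => (Submodule.mem_sInf.mp hx) p hp
    have hloc : ∀ m : M, ∃ n : ℕ, x ^ n • m = 0 := aux_locally_nilpotent hx'
    by_cases hM : Subsingleton M
    · exact ⟨1, Module.mem_annihilator.mpr fun m => Subsingleton.elim _ _⟩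
    · have : Nontrivial M := not_subsingleton_iff_nontrivial.mp hM
      obtain ⟨p, hp⟩ := associatedPrimes.nonempty R M
      have hxm : x ∈ maximalIdeal R :=
        le_maximalIdeal hp.isPrime.ne_top (hx' p hp)
      obtain ⟨n, hn⟩ := aux_nilpotent_of_locally_nilpotent hxm hloc
      exact ⟨n, Module.mem_annihilator.mpr hn⟩
  · apply le_sInf
    intro p hp
    rw [hp.isPrime.radical_le_iff, ← Submodule.annihilator_top]
    exact hp.annihilator_le
end

section
/- Let (R, m) be a commutative Noetherian local ring and let M be a complete R-module. Then every prime ideal p ∈ Koatt(M) is an intersection of associated primes of M, i.e. there is a family (p_λ) of elements of Ass(M) with p = ⋂_λ p_λ. -/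
open IsLocalRing TensorProduct

universe u v w x

/-- `Koatt M`: the set of prime ideals that are annihilators of submodules of `M`. -/
def Koatt (R : Type u) [CommRing R] (M : Type v) [AddCommGroup M] [Module R M] :
    Set (Ideal R) :=
  {p | p.IsPrime ∧ ∃ U : Submodule R M, U.annihilator = p}

/-- In a Noetherian ring, if all `a ^ i • x` are nonzero, there is an associated prime
containing the annihilator of `x` and avoiding `a`. -/
theorem exists_assocPrime_avoid {R : Type u} [CommRing R] [IsNoetherianRing R]
    {M : Type v} [AddCommGroup M] [Module R M] (a : R) (x : M)
    (hx : ∀ i : ℕ, a ^ i • x ≠ 0) :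
    ∃ q ∈ associatedPrimes R M, (R ∙ x).annihilator ≤ q ∧ a ∉ q := by
  obtain ⟨q, ⟨l, y, hqy, hy⟩, h₃⟩ :=
    set_has_maximal_iff_noetherian.mpr ‹IsNoetherianRing R›
      { P : Ideal R | (R ∙ x).annihilator ≤ P ∧
          ∃ y : M, P = (R ∙ y).annihilator ∧ ∀ i : ℕ, a ^ i • y ≠ 0 }
      ⟨(R ∙ x).annihilator, le_rfl, x, rfl, hx⟩
  subst hqy
  have ha : a ∉ (R ∙ y).annihilator := by
    intro h
    rw [Submodule.mem_annihilator_span_singleton] at h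
    exact hy 1 (by rwa [pow_one])
  have hprime : ((R ∙ y).annihilator).IsPrime := by
    constructor
    · intro htop
      exact ha (htop ▸ Submodule.mem_top)
    · intro b c hbc
      rw [or_iff_not_imp_right]
      intro hc
      -- all powers of `a` act nontrivially on `c • y`
      have hcy : ∀ i : ℕ, a ^ i • (c • y) ≠ 0 := by
        intro N hN
        have hy' : ∀ i : ℕ, a ^ i • (a ^ N • y) ≠ 0 := fun i h =>
          hy (i + N) (by rwa [pow_add, mul_smul])
        have hle : (R ∙ y).annihilator ≤ (R ∙ a ^ N • y).annihilator := by
          intro r hr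
          rw [Submodule.mem_annihilator_span_singleton] at hr ⊢
          rw [smul_comm, hr, smul_zero]
        have heq := hle.eq_of_not_lt
          (h₃ (R ∙ a ^ N • y).annihilator ⟨l.trans hle, _, rfl, hy'⟩)
        apply hc
        rw [heq, Submodule.mem_annihilator_span_singleton, smul_comm]
        exact hN
      have hle : (R ∙ y).annihilator ≤ (R ∙ c • y).annihilator := by
        intro r hr
        rw [Submodule.mem_annihilator_span_singleton] at hr ⊢
        rw [smul_comm, hr, smul_zero]
      have heq := hle.eq_of_not_lt
        (h₃ (R ∙ c • y).annihilator ⟨l.trans hle, _, rfl, hcy⟩)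
      rw [heq, Submodule.mem_annihilator_span_singleton, smul_smul]
      rw [Submodule.mem_annihilator_span_singleton] at hbc
      exact hbc
  exact ⟨(R ∙ y).annihilator, isAssociatedPrime_iff.mpr ⟨hprime, y, (Ideal.ext fun r => by rw [Submodule.mem_annihilator_span_singleton, Submodule.mem_colon_singleton, Submodule.mem_bot])⟩, l, ha⟩

/-- The key construction using completeness: if `p = Ann U` is prime, different from the
maximal ideal, and `a ∉ p`, then there is an element `x` (a limit of elements of `U`)
killed by `p` and on which all powers of `a` act nontrivially. -/
theorem key_complete {R : Type u} [CommRing R] [IsLocalRing R]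
    {M : Type v} [AddCommGroup M] [Module R M]
    [IsAdicComplete (maximalIdeal R) M]
    (U : Submodule R M) (hpPrime : U.annihilator.IsPrime)
    (hpm : U.annihilator ≠ maximalIdeal R) (a : R) (ha : a ∉ U.annihilator) :
    ∃ x : M, (∀ i : ℕ, a ^ i • x ≠ 0) ∧ U.annihilator ≤ (R ∙ x).annihilator := by
  set F : ℕ → Submodule R M := fun n => (maximalIdeal R ^ n • ⊤ : Submodule R M) with hF
  have Fanti : ∀ {m n : ℕ}, m ≤ n → F n ≤ F m := fun h =>
    Submodule.smul_mono_left (Ideal.pow_le_pow_right h)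
  have hsep : ∀ z : M, z ≠ 0 → ∃ n, z ∉ F n := by
    intro z hz
    by_contra h
    push_neg at h
    exact hz (IsHausdorff.haus (inferInstance : IsHausdorff (maximalIdeal R) M) z
      fun n => SModEq.zero.mpr (h n))
  have hpltm : U.annihilator ≤ maximalIdeal R := le_maximalIdeal hpPrime.ne_top
  -- in every `F k` there is an element of `U` not killed by `a ^ n`
  have hstep : ∀ n k : ℕ, ∃ u : M, u ∈ U ∧ u ∈ F k ∧ a ^ n • u ≠ 0 := by
    intro n k
    by_contra h
    push_neg at h
    have hmk : maximalIdeal R ^ k ≤ U.annihilator := by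
      intro r hr
      have hmem : a ^ n * r ∈ U.annihilator := by
        rw [Submodule.mem_annihilator]
        intro v hv
        have h1 : r • v ∈ U := U.smul_mem r hv
        have h2 : r • v ∈ F k := Submodule.smul_mem_smul hr Submodule.mem_top
        have := h (r • v) h1 h2
        rwa [mul_smul]
      rcases hpPrime.mul_mem_iff_mem_or_mem.mp hmem with h' | h'
      · exact absurd (hpPrime.mem_of_pow_mem n h') ha
      · exact h'
    have hmp : maximalIdeal R ≤ U.annihilator := fun w hw =>
      hpPrime.mem_of_pow_mem k (hmk (Ideal.pow_mem_pow hw k))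
    exact hpm (le_antisymm hpltm hmp)
  -- uniform separation for finitely many elements
  have unif : ∀ (k : ℕ) (z : M), (∀ i ≤ k, a ^ i • z ≠ 0) →
      ∃ T : ℕ, ∀ i ≤ k, a ^ i • z ∉ F T := by
    intro k
    induction k with
    | zero =>
      intro z hz
      obtain ⟨T, hT⟩ := hsep _ (hz 0 le_rfl)
      exact ⟨T, fun i hi => by rw [Nat.le_zero.mp hi]; exact hT⟩
    | succ k ih =>
      intro z hz
      obtain ⟨T, hT⟩ := ih z fun i hi => hz i (hi.trans (Nat.le_succ k))
      obtain ⟨T', hT'⟩ := hsep _ (hz (k + 1) le_rfl)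
      refine ⟨max T T', fun i hi => ?_⟩
      rcases Nat.lt_succ_iff_lt_or_eq.mp (Nat.lt_succ_of_le hi) with h' | h'
      · exact fun hmem => hT i (Nat.lt_succ_iff.mp h') (Fanti (le_max_left T T') hmem)
      · subst h'
        exact fun hmem => hT' (Fanti (le_max_right T T') hmem)
  -- the inductive step of the construction
  have step : ∀ (k : ℕ) (z : M) (t : ℕ), z ∈ U → (∀ i ≤ k, a ^ i • z ≠ 0) →
      ∃ z' : M, ∃ t' : ℕ, z' ∈ U ∧ (∀ i ≤ k + 1, a ^ i • z' ≠ 0) ∧ t < t' ∧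
        (∀ i ≤ k, a ^ i • z ∉ F t') ∧ z' - z ∈ F t' := by
    intro k z t hzU hz
    obtain ⟨T, hT⟩ := unif k z hz
    set t' := max T (t + 1) with ht'
    have hT' : ∀ i ≤ k, a ^ i • z ∉ F t' := fun i hi hmem =>
      hT i hi (Fanti (le_max_left _ _) hmem)
    have htt' : t < t' := lt_of_lt_of_le (Nat.lt_succ_self t) (le_max_right _ _)
    by_cases hk1 : a ^ (k + 1) • z ≠ 0
    · refine ⟨z, t', hzU, ?_, htt', hT', by simpa using Submodule.zero_mem (F t')⟩
      intro i hi
      rcases Nat.lt_succ_iff_lt_or_eq.mp (Nat.lt_succ_of_le hi) with h' | h'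
      · exact hz i (Nat.lt_succ_iff.mp h')
      · subst h'; exact hk1
    · push_neg at hk1
      obtain ⟨u, huU, huF, hu⟩ := hstep (k + 1) t'
      refine ⟨z + u, t', U.add_mem hzU huU, ?_, htt', hT', by simpa using huF⟩
      intro i hi
      rcases Nat.lt_succ_iff_lt_or_eq.mp (Nat.lt_succ_of_le hi) with h' | h'
      · have hi' : i ≤ k := Nat.lt_succ_iff.mp h'
        intro h0
        rw [smul_add] at h0
        apply hT' i hi'
        rw [eq_neg_of_add_eq_zero_left h0]
        exact Submodule.neg_mem _ ((F t').smul_mem _ huF)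
      · subst h'
        rw [smul_add, hk1, zero_add]
        exact hu
  choose f g h1 h2 h3 h4 h5 using step
  -- initial element
  obtain ⟨u₀, hu₀U, _, hu₀⟩ := hstep 0 0
  have hu₀' : ∀ i ≤ 0, a ^ i • u₀ ≠ 0 := by
    intro i hi
    rw [Nat.le_zero.mp hi]
    exact hu₀
  -- the recursively defined sequence together with its invariant
  let seq : ∀ k : ℕ, {v : M × ℕ // v.1 ∈ U ∧ ∀ i ≤ k, a ^ i • v.1 ≠ 0} := fun k =>
    Nat.rec (⟨(u₀, 0), hu₀U, hu₀'⟩)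
      (fun k ih =>
        ⟨(f k ih.1.1 ih.1.2 ih.2.1 ih.2.2, g k ih.1.1 ih.1.2 ih.2.1 ih.2.2),
          h1 k ih.1.1 ih.1.2 ih.2.1 ih.2.2, h2 k ih.1.1 ih.1.2 ih.2.1 ih.2.2⟩) k
  set s : ℕ → M := fun k => (seq k).1.1 with hs
  set tt : ℕ → ℕ := fun k => (seq k).1.2 with httdef
  have hsU : ∀ k, s k ∈ U := fun k => (seq k).2.1
  have hsnz : ∀ k, ∀ i ≤ k, a ^ i • s k ≠ 0 := fun k => (seq k).2.2
  have htmono : ∀ k, tt k < tt (k + 1) := fun k =>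
    h3 k (s k) (tt k) (seq k).2.1 (seq k).2.2
  have hsout : ∀ k, ∀ i ≤ k, a ^ i • s k ∉ F (tt (k + 1)) := fun k =>
    h4 k (s k) (tt k) (seq k).2.1 (seq k).2.2
  have hsd : ∀ k, s (k + 1) - s k ∈ F (tt (k + 1)) := fun k =>
    h5 k (s k) (tt k) (seq k).2.1 (seq k).2.2
  have htmono' : Monotone tt := monotone_nat_of_le_succ fun n => (htmono n).le
  have htk : ∀ k, k ≤ tt k := fun k => (strictMono_nat_of_lt_succ htmono).le_apply
  -- partial sums form a Cauchy sequence, control on the tails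
  have hdiffs : ∀ k n, k ≤ n → s n - s k ∈ F (tt (k + 1)) := by
    intro k n hkn
    induction n, hkn using Nat.le_induction with
    | base => simpa using (F (tt (k + 1))).zero_mem
    | succ n hkn ih =>
      have hle : s (n + 1) - s n ∈ F (tt (k + 1)) :=
        Fanti (htmono' (by omega : k + 1 ≤ n + 1)) (hsd n)
      have := (F (tt (k + 1))).add_mem hle ih
      rwa [sub_add_sub_cancel] at this
  have hcauchy : ∀ {m n : ℕ}, m ≤ n →
      s m ≡ s n [SMOD (maximalIdeal R ^ m • ⊤ : Submodule R M)] := by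
    intro m n hmn
    rw [SModEq.sub_mem]
    have h1 : s n - s m ∈ F (tt (m + 1)) := hdiffs m n hmn
    have h2 : F (tt (m + 1)) ≤ F m := Fanti ((Nat.le_succ m).trans (htk (m + 1)))
    have h3 : s m - s n ∈ F m := by
      rw [show s m - s n = -(s n - s m) by abel]
      exact (F m).neg_mem (h2 h1)
    exact h3
  obtain ⟨L, hL⟩ :=
    IsPrecomplete.prec (inferInstance : IsPrecomplete (maximalIdeal R) M) @hcauchy
  have hLF : ∀ n, s n - L ∈ F n := fun n => SModEq.sub_mem.mp (hL n)
  refine ⟨L, ?_, ?_⟩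
  · -- all powers of `a` act nontrivially on the limit
    intro i hiL
    apply hsout i i le_rfl
    have hLs : s i - L ∈ F (tt (i + 1)) := by
      set n := max i (tt (i + 1)) with hn
      have e1 : s n - L ∈ F (tt (i + 1)) := Fanti (le_max_right _ _) (hLF n)
      have e2 : s n - s i ∈ F (tt (i + 1)) := hdiffs i n (le_max_left _ _)
      have h := (F (tt (i + 1))).sub_mem e1 e2
      rwa [show s n - L - (s n - s i) = s i - L by abel] at h
    have := (F (tt (i + 1))).smul_mem (a ^ i) hLs
    rwa [smul_sub, hiL, sub_zero] at this
  · -- the limit is killed by the annihilator of `U`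
    intro r hr
    rw [Submodule.mem_annihilator_span_singleton]
    have hall : ∀ n, r • L ∈ F n := by
      intro n
      have h1 : r • s n = 0 := Submodule.mem_annihilator.mp hr (s n) (hsU n)
      have h2 : r • (L - s n) ∈ F n := by
        refine (F n).smul_mem r ?_
        rw [show L - s n = -(s n - L) by abel]
        exact (F n).neg_mem (hLF n)
      have h3 : r • L = r • (L - s n) := by rw [smul_sub, h1, sub_zero]
      rw [h3]; exact h2
    exact IsHausdorff.haus (inferInstance : IsHausdorff (maximalIdeal R) M) _
      fun n => SModEq.zero.mpr (hall n)

theorem koatt_eq_inf_of_associatedPrimes_of_complete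
    (R : Type u) [CommRing R] [IsNoetherianRing R] [IsLocalRing R]
    (M : Type v) [AddCommGroup M] [Module R M]
    [IsAdicComplete (maximalIdeal R) M]
    (p : Ideal R) (hp : p ∈ Koatt R M) :
    ∃ S ⊆ associatedPrimes R M, S.Nonempty ∧ p = sInf S := by
  obtain ⟨hpPrime, U, rfl⟩ := hp
  by_cases hpm : U.annihilator = maximalIdeal R
  · -- `p` is the maximal ideal; it is itself an associated prime
    have hUbot : U ≠ ⊥ := by
      rintro rfl
      rw [Submodule.annihilator_bot] at hpPrime
      exact hpPrime.ne_top rfl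
    obtain ⟨x, hxU, hx0⟩ := (Submodule.ne_bot_iff U).mp hUbot
    have h1 : U.annihilator ≤ (R ∙ x).annihilator := by
      intro r hr
      rw [Submodule.mem_annihilator_span_singleton]
      exact Submodule.mem_annihilator.mp hr x hxU
    have h2 : (R ∙ x).annihilator ≠ ⊤ := by
      rw [Ne, Submodule.annihilator_eq_top_iff, Submodule.span_singleton_eq_bot]
      exact hx0
    have h3 : (R ∙ x).annihilator = U.annihilator :=
      le_antisymm (hpm ▸ le_maximalIdeal h2) h1
    exact ⟨{U.annihilator}, Set.singleton_subset_iff.mpr (isAssociatedPrime_iff.mpr ⟨hpPrime, x, h3.symm.trans (Ideal.ext fun r => by rw [Submodule.mem_annihilator_span_singleton, Submodule.mem_colon_singleton, Submodule.mem_bot])⟩),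
      ⟨U.annihilator, rfl⟩, sInf_singleton.symm⟩
  · -- `p` is not the maximal ideal: use the key construction
    have key : ∀ a ∉ U.annihilator,
        ∃ q ∈ associatedPrimes R M, U.annihilator ≤ q ∧ a ∉ q := by
      intro a hap
      obtain ⟨x, hx, hpx⟩ := key_complete U hpPrime hpm a hap
      obtain ⟨q, hq, hle, haq⟩ := exists_assocPrime_avoid a x hx
      exact ⟨q, hq, hpx.trans hle, haq⟩
    refine ⟨{q | q ∈ associatedPrimes R M ∧ U.annihilator ≤ q}, fun q hq => hq.1, ?_, ?_⟩
    · obtain ⟨q, hq, hpq, _⟩ := key 1 ((Ideal.ne_top_iff_one _).mp hpPrime.ne_top)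
      exact ⟨q, hq, hpq⟩
    · refine le_antisymm (le_sInf fun q hq => hq.2) ?_
      intro b hb
      by_contra hbp
      obtain ⟨q, hq, hpq, hbq⟩ := key b hbp
      exact hbq (Submodule.mem_sInf.mp hb q ⟨hq, hpq⟩)
end

section
/- Let (R, m) be a commutative Noetherian local ring and let M be a separated R-module. Then Ass(M̂) ⊆ Koatt(M) holds if and only if Koatt(M̂) = Koatt(M). -/
open IsLocalRing TensorProduct

universe u v w x

section Aux

variable {R : Type u} [CommRing R]

theorem annihilator_span_singleton_eq_colon {M : Type v} [AddCommGroup M] [Module R M]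
    (x : M) : (R ∙ x).annihilator = (⊥ : Submodule R M).colon {x} := by
  ext r
  rw [Submodule.mem_annihilator_span_singleton, Submodule.mem_colon_singleton, Submodule.mem_bot]

theorem ass_subset_koatt {M : Type v} [AddCommGroup M] [Module R M] [IsNoetherianRing R] :
    associatedPrimes R M ⊆ Koatt R M := by
  rintro p hp'
  obtain ⟨hp, x, hx⟩ := isAssociatedPrime_iff.mp hp'
  exact ⟨hp, R ∙ x, (annihilator_span_singleton_eq_colon x).trans hx.symm⟩

theorem annihilator_map_of_injective {M : Type v} {M' : Type w} [AddCommGroup M] [Module R M]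
    [AddCommGroup M'] [Module R M'] (f : M →ₗ[R] M') (hf : Function.Injective f)
    (U : Submodule R M) : (U.map f).annihilator = U.annihilator := by
  ext r
  simp only [Submodule.mem_annihilator]
  constructor
  · intro h x hx
    apply hf
    rw [map_smul, map_zero]
    exact h (f x) (Submodule.mem_map_of_mem hx)
  · rintro h y ⟨x, hx, rfl⟩
    rw [← map_smul, h x hx, map_zero]

/-- If `x` is not `a`-power-torsion, there is an associated prime of the ambient module of the
form `(R ∙ (r • x)).annihilator` which does not contain `a`. -/
theorem exists_assoc_of_forall_pow_smul_ne_zero {M : Type v} [AddCommGroup M] [Module R M]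
    [IsNoetherianRing R] (a : R) (x : M) (hx : ∀ n : ℕ, a ^ n • x ≠ 0) :
    ∃ r : R, ((R ∙ (r • x)).annihilator).IsPrime ∧ a ∉ (R ∙ (r • x)).annihilator ∧
      (∀ n : ℕ, a ^ n • (r • x) ≠ 0) := by
  classical
  set 𝒮 : Set (Ideal R) :=
    {J | ∃ r : R, J = (R ∙ (r • x)).annihilator ∧ ∀ n : ℕ, a ^ n • (r • x) ≠ 0} with h𝒮
  have hne : 𝒮.Nonempty := ⟨(R ∙ ((1 : R) • x)).annihilator, 1, rfl, by simpa using hx⟩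
  obtain ⟨q, hq, hmax⟩ := (set_has_maximal_iff_noetherian.mpr ‹IsNoetherianRing R›) 𝒮 hne
  obtain ⟨r, rfl, hr⟩ := hq
  have hmem : ∀ u : R, u ∈ (R ∙ (r • x)).annihilator ↔ u • (r • x) = 0 := fun u =>
    Submodule.mem_annihilator_span_singleton _ _
  have hna : a ∉ (R ∙ (r • x)).annihilator := by
    intro ha
    exact hr 1 (by rw [pow_one]; exact (hmem a).1 ha)
  have hprime : ((R ∙ (r • x)).annihilator).IsPrime := by
    constructor
    · intro htop
      have h1 : (1 : R) • (r • x) = 0 := (hmem 1).1 (htop ▸ Submodule.mem_top)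
      have : r • x = 0 := by simpa using h1
      exact hr 0 (by simpa using this)
    · intro b c hbc
      rw [or_iff_not_imp_left]
      intro hb
      by_cases hw : ∀ n : ℕ, a ^ n • (b • (r • x)) ≠ 0
      · -- the annihilator of `b • (r • x)` is in `𝒮` and contains `q`, hence is `q`
        have hform : b • (r • x) = (b * r) • x := (mul_smul b r x).symm
        have hJ : (R ∙ ((b * r) • x)).annihilator ∈ 𝒮 :=
          ⟨b * r, rfl, fun n => by rw [← hform]; exact hw n⟩
        have hle : (R ∙ (r • x)).annihilator ≤ (R ∙ ((b * r) • x)).annihilator := by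
          intro u hu
          rw [Submodule.mem_annihilator_span_singleton, ← hform, smul_comm,
            (hmem u).1 hu, smul_zero]
        have heq : (R ∙ (r • x)).annihilator = (R ∙ ((b * r) • x)).annihilator := by
          by_contra hne'
          exact hmax _ hJ (lt_of_le_of_ne hle hne')
        rw [heq, Submodule.mem_annihilator_span_singleton, ← hform, smul_smul, mul_comm c b]
        exact (hmem (b * c)).1 hbc
      · push_neg at hw
        obtain ⟨n, hn⟩ := hw
        have hform : a ^ n • (r • x) = (a ^ n * r) • x := (mul_smul _ r x).symm
        have hJ : (R ∙ ((a ^ n * r) • x)).annihilator ∈ 𝒮 := by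
          refine ⟨a ^ n * r, rfl, fun m => ?_⟩
          rw [← hform, smul_smul, ← pow_add]
          exact hr (m + n)
        have hle : (R ∙ (r • x)).annihilator ≤ (R ∙ ((a ^ n * r) • x)).annihilator := by
          intro u hu
          rw [Submodule.mem_annihilator_span_singleton, ← hform, smul_comm,
            (hmem u).1 hu, smul_zero]
        have heq : (R ∙ (r • x)).annihilator = (R ∙ ((a ^ n * r) • x)).annihilator := by
          by_contra hne'
          exact hmax _ hJ (lt_of_le_of_ne hle hne')
        exfalso
        apply hb
        rw [heq, Submodule.mem_annihilator_span_singleton, ← hform, smul_comm]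
        exact hn
  exact ⟨r, hprime, hna, hr⟩

end Aux

section Completion

variable {R : Type u} [CommRing R] {M : Type v} [AddCommGroup M] [Module R M]

theorem val_eq_zero_of_mem_pow_smul (I : Ideal R) {n : ℕ} {x : AdicCompletion I M}
    (hx : x ∈ (I ^ n • ⊤ : Submodule R (AdicCompletion I M))) : x.val n = 0 := by
  refine Submodule.smul_induction_on hx (fun r hr y _ => ?_) (fun y z hy hz => ?_)
  · rw [AdicCompletion.val_smul_apply]
    obtain ⟨m, hm⟩ := Submodule.Quotient.mk_surjective (I ^ n • ⊤ : Submodule R M) (y.val n)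
    rw [← hm, ← Submodule.Quotient.mk_smul, Submodule.Quotient.mk_eq_zero]
    exact Submodule.smul_mem_smul hr Submodule.mem_top
  · rw [AdicCompletion.val_add_apply, hy, hz, add_zero]

theorem val_eq_zero_of_mem_pow_smul_le (I : Ideal R) {k n : ℕ} (hkn : k ≤ n)
    {x : AdicCompletion I M}
    (hx : x ∈ (I ^ n • ⊤ : Submodule R (AdicCompletion I M))) : x.val k = 0 :=
  val_eq_zero_of_mem_pow_smul I
    (Submodule.smul_mono_left (Ideal.pow_le_pow_right hkn) hx)

theorem val_ne_zero_mono (I : Ideal R) {x : AdicCompletion I M} {m n : ℕ} (hmn : m ≤ n)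
    (h : x.val m ≠ 0) : x.val n ≠ 0 := fun h0 =>
  h (by rw [← AdicCompletion.transitionMap_comp_eval_apply I M hmn x, h0, map_zero])

theorem exists_val_ne_zero (I : Ideal R) {x : AdicCompletion I M} (hx : x ≠ 0) :
    ∃ K, x.val K ≠ 0 := by
  by_contra h
  push_neg at h
  exact hx (AdicCompletion.ext fun n => by rw [h n, AdicCompletion.val_zero_apply])

theorem adicCompletion_of_injective (I : Ideal R) [IsHausdorff I M] :
    Function.Injective (AdicCompletion.of I M) := by
  intro x y hxy
  have hz : AdicCompletion.of I M (x - y) = 0 := by rw [map_sub, hxy, sub_self]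
  have : x - y = 0 := by
    refine IsHausdorff.haus ‹IsHausdorff I M› (x - y) fun n => SModEq.zero.2 ?_
    have h1 : (AdicCompletion.of I M (x - y)).val n = 0 := by rw [hz]; rfl
    rw [AdicCompletion.of_apply] at h1
    rwa [← Submodule.Quotient.mk_eq_zero (I ^ n • ⊤ : Submodule R M)]
  exact sub_eq_zero.mp this

/-- The diagonal construction: if for all `n, k` there is an element of `I ^ k • N` not killed
by `a ^ n`, then (using completeness of the adic completion in the guise of the diagonal trick)
there is an element `y`, approximable by elements of `N`, with `a ^ n • y ≠ 0` for all `n`. -/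
theorem exists_diagonal (I : Ideal R) (N : Submodule R (AdicCompletion I M)) (a : R)
    (H : ∀ n k : ℕ, ∃ x ∈ (I ^ k • N : Submodule R (AdicCompletion I M)), a ^ n • x ≠ 0) :
    ∃ y : AdicCompletion I M, (∀ n : ℕ, a ^ n • y ≠ 0) ∧
      ∀ n : ℕ, ∃ z ∈ N, y.val n = z.val n := by
  classical
  -- step lemma
  have step : ∀ (j : ℕ) (s : AdicCompletion I M) (B : ℕ), s ∈ N →
      (∀ i ≤ j, (a ^ i • s).val B ≠ 0) →
      ∃ s' B', s' ∈ N ∧ B < B' ∧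
        s' - s ∈ (I ^ (B + 1) • ⊤ : Submodule R (AdicCompletion I M)) ∧
        ∀ i ≤ j + 1, (a ^ i • s').val B' ≠ 0 := by
    intro j s B hsN hinv
    have main : ∃ s' : AdicCompletion I M, s' ∈ N ∧
        s' - s ∈ (I ^ (B + 1) • ⊤ : Submodule R (AdicCompletion I M)) ∧
        (∀ i ≤ j, (a ^ i • s').val B ≠ 0) ∧ a ^ (j + 1) • s' ≠ 0 := by
      by_cases hzero : a ^ (j + 1) • s = 0
      · obtain ⟨xx, hxmem, hxa⟩ := H (j + 1) (B + 1)
        have hxN : xx ∈ N := Submodule.smul_le_right hxmem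
        have hxT : xx ∈ (I ^ (B + 1) • ⊤ : Submodule R (AdicCompletion I M)) :=
          (smul_mono_right (I ^ (B + 1)) (le_top : N ≤ ⊤) :
            I ^ (B + 1) • N ≤ I ^ (B + 1) • ⊤) hxmem
        refine ⟨s + xx, N.add_mem hsN hxN, by simpa using hxT, ?_, ?_⟩
        · intro i hi
          have h1 : (a ^ i • xx).val B = 0 :=
            val_eq_zero_of_mem_pow_smul_le I (Nat.le_succ B)
              (Submodule.smul_mem _ _ hxT)
          rw [smul_add, AdicCompletion.val_add_apply, h1, add_zero]
          exact hinv i hi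
        · rw [smul_add, hzero, zero_add]
          exact hxa
      · exact ⟨s, hsN, by simp, hinv, hzero⟩
    obtain ⟨s', hs'N, hs'd, hs'inv, hs'j⟩ := main
    obtain ⟨K, hK⟩ := exists_val_ne_zero I hs'j
    refine ⟨s', max (B + 1) K, hs'N,
      lt_of_lt_of_le (Nat.lt_succ_self B) (le_max_left _ _), hs'd, ?_⟩
    intro i hi
    by_cases hij : i ≤ j
    · exact val_ne_zero_mono I (le_trans (Nat.le_succ B) (le_max_left _ _)) (hs'inv i hij)
    · have hieq : i = j + 1 := by omega
      subst hieq
      exact val_ne_zero_mono I (le_max_right _ _) hK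
  choose f fB hfN hflt hfdiff hfinv using step
  -- base element
  obtain ⟨x0, hx0mem, hx0⟩ := H 0 0
  have hx0N : x0 ∈ N := by
    rwa [pow_zero, Ideal.one_eq_top, Submodule.top_smul] at hx0mem
  obtain ⟨K0, hK0⟩ := exists_val_ne_zero I (show a ^ 0 • x0 ≠ 0 from hx0)
  have hbase : x0 ∈ N ∧ ∀ i ≤ 0, (a ^ i • x0).val K0 ≠ 0 := by
    refine ⟨hx0N, fun i hi => ?_⟩
    have : i = 0 := Nat.le_zero.mp hi
    subst this
    exact hK0
  -- the recursively defined sequence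
  let Q : ℕ → AdicCompletion I M × ℕ → Prop := fun j p =>
    p.1 ∈ N ∧ ∀ i ≤ j, (a ^ i • p.1).val p.2 ≠ 0
  let g : ∀ j : ℕ, {p : AdicCompletion I M × ℕ // Q j p} := fun j =>
    Nat.rec (motive := fun j => {p : AdicCompletion I M × ℕ // Q j p})
      ⟨(x0, K0), hbase⟩
      (fun j pj =>
        ⟨(f j pj.1.1 pj.1.2 pj.2.1 pj.2.2, fB j pj.1.1 pj.1.2 pj.2.1 pj.2.2),
          hfN j pj.1.1 pj.1.2 pj.2.1 pj.2.2,
          hfinv j pj.1.1 pj.1.2 pj.2.1 pj.2.2⟩) j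
  let s : ℕ → AdicCompletion I M := fun j => (g j).1.1
  let B : ℕ → ℕ := fun j => (g j).1.2
  have hsN : ∀ j, s j ∈ N := fun j => (g j).2.1
  have hinv : ∀ j, ∀ i ≤ j, (a ^ i • s j).val (B j) ≠ 0 := fun j => (g j).2.2
  have hlt : ∀ j, B j < B (j + 1) := fun j =>
    hflt j (s j) (B j) ((g j).2.1) ((g j).2.2)
  have hdiff : ∀ j, s (j + 1) - s j ∈
      (I ^ (B j + 1) • ⊤ : Submodule R (AdicCompletion I M)) := fun j =>
    hfdiff j (s j) (B j) ((g j).2.1) ((g j).2.2)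
  have hBmono : StrictMono B := strictMono_nat_of_lt_succ hlt
  have hjB : ∀ j, j ≤ B j := fun j => hBmono.le_apply
  -- cumulative difference estimate
  have hdiff2 : ∀ m n : ℕ, m ≤ n →
      s n - s m ∈ (I ^ (B m + 1) • ⊤ : Submodule R (AdicCompletion I M)) := by
    intro m n hmn
    induction n, hmn using Nat.le_induction with
    | base => simpa using Submodule.zero_mem _
    | succ n hmn ih =>
      have h1 : s (n + 1) - s n ∈
          (I ^ (B m + 1) • ⊤ : Submodule R (AdicCompletion I M)) := by
        refine Submodule.smul_mono_left (Ideal.pow_le_pow_right ?_) (hdiff n)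
        have := hBmono.monotone hmn
        omega
      have := Submodule.add_mem _ h1 ih
      rwa [sub_add_sub_cancel] at this
  -- key two-index invariant
  have hkey : ∀ n k : ℕ, n ≤ k → (a ^ n • s k).val (B n) ≠ 0 := by
    intro n k hnk
    have hd : a ^ n • (s k - s n) ∈
        (I ^ (B n + 1) • ⊤ : Submodule R (AdicCompletion I M)) :=
      Submodule.smul_mem _ _ (hdiff2 n k hnk)
    have h0 : (a ^ n • (s k - s n)).val (B n) = 0 :=
      val_eq_zero_of_mem_pow_smul_le I (Nat.le_succ _) hd
    have heq : a ^ n • s k = a ^ n • s n + a ^ n • (s k - s n) := by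
      rw [smul_sub]
      abel
    rw [heq, AdicCompletion.val_add_apply, h0, add_zero]
    exact hinv n n le_rfl
  -- the diagonal element
  have hcompat : ∀ {m n : ℕ} (hmn : m ≤ n),
      AdicCompletion.transitionMap I M hmn ((s n).val n) = (s m).val m := by
    intro m n hmn
    have h1 : AdicCompletion.transitionMap I M hmn ((s n).val n) = (s n).val m :=
      (s n).property hmn
    have h0 : (s n - s m).val m = 0 := by
      refine val_eq_zero_of_mem_pow_smul_le I ?_ (hdiff2 m n hmn)
      have := hjB m
      omega
    rw [AdicCompletion.val_sub_apply, sub_eq_zero] at h0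
    rw [h1, h0]
  let y : AdicCompletion I M := ⟨fun n => (s n).val n, hcompat⟩
  refine ⟨y, ?_, fun n => ⟨s n, hsN n, rfl⟩⟩
  intro n hy0
  have h1 : (a ^ n • y).val (B n) = (a ^ n • s (B n)).val (B n) := by
    rw [AdicCompletion.val_smul_apply, AdicCompletion.val_smul_apply]
  have h2 := hkey n (B n) (hjB n)
  rw [← h1, hy0, AdicCompletion.val_zero] at h2
  exact h2 rfl

end Completion

theorem ass_completion_subset_koatt_iff_koatt_completion_eq
    (R : Type u) [CommRing R] [IsNoetherianRing R] [IsLocalRing R]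
    (M : Type v) [AddCommGroup M] [Module R M]
    [IsHausdorff (maximalIdeal R) M] :
    associatedPrimes R (AdicCompletion (maximalIdeal R) M) ⊆ Koatt R M ↔
      Koatt R (AdicCompletion (maximalIdeal R) M) = Koatt R M := by
  set I := maximalIdeal R with hI
  constructor
  · intro hA
    apply Set.Subset.antisymm
    · rintro p ⟨hp, U, hU⟩
      -- the p-torsion submodule of the completion
      let N : Submodule R (AdicCompletion I M) :=
        { carrier := {x | ∀ g ∈ p, g • x = 0}
          add_mem' := fun {x y} hx hy g hg => by
            rw [smul_add, hx g hg, hy g hg, add_zero]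
          zero_mem' := fun g _ => smul_zero g
          smul_mem' := fun c x hx g hg => by
            rw [smul_comm, hx g hg, smul_zero] }
      have hmemN : ∀ x : AdicCompletion I M, x ∈ N ↔ ∀ g ∈ p, g • x = 0 := fun x => Iff.rfl
      have hUN : U ≤ N := by
        intro x hx
        intro g hg
        rw [← hU] at hg
        exact Submodule.mem_annihilator.1 hg x hx
      have hNann : N.annihilator = p := by
        apply le_antisymm
        · rw [← hU]
          exact Submodule.annihilator_mono hUN
        · intro g hg
          exact Submodule.mem_annihilator.2 fun x hx => hx g hg
      choose Vf hVf using
        fun (q : Ideal R) (hq : q ∈ associatedPrimes R (AdicCompletion I M)) => (hA hq).2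
      refine ⟨hp, ⨆ (q : Ideal R)
        (h : q ∈ associatedPrimes R (AdicCompletion I M) ∧ p ≤ q), Vf q h.1, ?_⟩
      have hann : (⨆ (q : Ideal R)
          (h : q ∈ associatedPrimes R (AdicCompletion I M) ∧ p ≤ q), Vf q h.1).annihilator =
          ⨅ (q : Ideal R) (h : q ∈ associatedPrimes R (AdicCompletion I M) ∧ p ≤ q), q := by
        rw [Submodule.annihilator_iSup]
        exact iInf_congr fun q => by
          rw [Submodule.annihilator_iSup]
          exact iInf_congr fun h => hVf q h.1
      rw [hann]
      apply le_antisymm _ (le_iInf fun q => le_iInf fun h => h.2)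
      intro a ha
      by_contra hap
      have hamem : ∀ q : Ideal R, q ∈ associatedPrimes R (AdicCompletion I M) → p ≤ q →
          a ∈ q := by
        intro q h1 h2
        have := (Submodule.mem_iInf _).1 ha q
        exact (Submodule.mem_iInf _).1 this ⟨h1, h2⟩
      -- every element of N is a-power-torsion
      have htor : ∀ x ∈ N, ∃ n : ℕ, a ^ n • x = 0 := by
        intro x hx
        by_contra hcon
        push_neg at hcon
        obtain ⟨r, hprime, hna, _⟩ := exists_assoc_of_forall_pow_smul_ne_zero a x hcon
        apply hna
        apply hamem _ (isAssociatedPrime_iff.mpr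
            ⟨hprime, ⟨r • x, annihilator_span_singleton_eq_colon _⟩⟩)
        intro g hg
        rw [Submodule.mem_annihilator_span_singleton, smul_comm, hx g hg, smul_zero]
      -- some power of a kills I ^ k • N
      have hkill : ∃ n k : ℕ, ∀ x ∈ (I ^ k • N : Submodule R (AdicCompletion I M)),
          a ^ n • x = 0 := by
        by_contra hcon
        push_neg at hcon
        obtain ⟨y, hy, hyval⟩ := exists_diagonal I N a hcon
        have hyN : y ∈ N := by
          intro g hg
          refine AdicCompletion.ext fun n => ?_
          obtain ⟨z, hz, hzval⟩ := hyval n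
          rw [AdicCompletion.val_smul_apply, hzval, ← AdicCompletion.val_smul_apply, hz g hg,
            AdicCompletion.val_zero_apply]
        obtain ⟨n, hn⟩ := htor y hyN
        exact hy n hn
      obtain ⟨n, k, hnk⟩ := hkill
      have hIk : I ^ k ≤ p := by
        intro g hg
        have hkills : ∀ x ∈ N, (a ^ n * g) • x = 0 := by
          intro x hx
          rw [mul_smul]
          exact hnk _ (Submodule.smul_mem_smul hg hx)
        have hmem : a ^ n * g ∈ p := by
          rw [← hNann]
          exact Submodule.mem_annihilator.2 hkills
        rcases hp.mem_or_mem hmem with h | h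
        · exact absurd (hp.mem_of_pow_mem n h) hap
        · exact h
      have hIp : I ≤ p := Ideal.IsPrime.le_of_pow_le (hP := hp) hIk
      have hpI : p = I := le_antisymm (IsLocalRing.le_maximalIdeal hp.ne_top) hIp
      have hN0 : N ≠ ⊥ := by
        intro h
        rw [h, Submodule.annihilator_bot] at hNann
        exact hp.ne_top hNann.symm
      obtain ⟨x, hxN, hx0⟩ := (Submodule.ne_bot_iff N).1 hN0
      have hxann : (R ∙ x).annihilator ≠ ⊤ := fun h =>
        hx0 (Submodule.span_singleton_eq_bot.mp (Submodule.annihilator_eq_top_iff.mp h))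
      have hpx : p = (R ∙ x).annihilator := by
        apply le_antisymm
        · intro g hg
          rw [Submodule.mem_annihilator_span_singleton]
          exact hxN g hg
        · rw [hpI]
          exact IsLocalRing.le_maximalIdeal hxann
      exact hap (hamem p (isAssociatedPrime_iff.mpr
          ⟨hp, x, hpx.trans (annihilator_span_singleton_eq_colon x)⟩) le_rfl)
    · rintro p ⟨hp, U, hU⟩
      refine ⟨hp, U.map (AdicCompletion.of I M), ?_⟩
      rw [annihilator_map_of_injective _ (adicCompletion_of_injective I), hU]
  · intro h
    rw [← h]
    exact ass_subset_koatt
end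

section
/- Let (R, m) be a commutative Noetherian local ring, M a complete R-module and U a submodule of M. Then U is complete if and only if M/U is reduced. -/
open IsLocalRing TensorProduct

universe u v w x

open Submodule

section Aux

variable {R : Type u} [CommRing R] {M : Type v} [AddCommGroup M] [Module R M]

theorem aux_smul_decomp (S : Finset R) (P : Submodule R M) (x : M)
    (hx : x ∈ Ideal.span (S : Set R) • P) :
    ∃ v : R → M, (∀ a, v a ∈ P) ∧ x = ∑ a ∈ S, a • v a := by
  refine Submodule.smul_induction_on hx ?_ ?_
  · intro r hr p hp
    obtain ⟨c, hc⟩ := mem_span_finset.mp hr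
    exact ⟨fun a => c a • p, fun a => Submodule.smul_mem _ _ hp, by
      rw [← hc.2, Finset.sum_smul]
      exact Finset.sum_congr rfl fun a _ => by rw [smul_eq_mul, mul_comm, mul_smul]⟩
  · rintro x y ⟨v, hv, hx⟩ ⟨w, hw, hy⟩
    exact ⟨v + w, fun a => add_mem (hv a) (hw a), by
      simp [hx, hy, Finset.sum_add_distrib, smul_add]⟩

variable (I : Ideal R) (U : Submodule R M)

/-- The set of `I`-adic limits in `M` of Cauchy sequences from `U` (Cauchy with respect to
the `I`-adic topology of `U` itself). -/
def limitSet : Submodule R M where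
  carrier := {x | ∃ f : ℕ → M, (∀ n, f n ∈ U) ∧
      (∀ k l, k ≤ l → f l - f k ∈ (I ^ k • U : Submodule R M)) ∧
      (∀ n, x - f n ∈ (I ^ n • (⊤ : Submodule R M)))}
  zero_mem' := ⟨0, fun _ => zero_mem U, fun k l _ => by simpa using zero_mem _,
    fun n => by simpa using zero_mem _⟩
  add_mem' := by
    rintro x y ⟨f, hf1, hf2, hf3⟩ ⟨g, hg1, hg2, hg3⟩
    refine ⟨f + g, fun n => add_mem (hf1 n) (hg1 n), fun k l h => ?_, fun n => ?_⟩
    · have := add_mem (hf2 k l h) (hg2 k l h)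
      convert this using 1
      simp only [Pi.add_apply]
      abel
    · have := add_mem (hf3 n) (hg3 n)
      convert this using 1
      simp only [Pi.add_apply]
      abel
  smul_mem' := by
    rintro c x ⟨f, hf1, hf2, hf3⟩
    refine ⟨c • f, fun n => Submodule.smul_mem _ _ (hf1 n), fun k l h => ?_, fun n => ?_⟩
    · have := Submodule.smul_mem _ c (hf2 k l h)
      convert this using 1
      simp [smul_sub]
    · have := Submodule.smul_mem _ c (hf3 n)
      convert this using 1
      simp [smul_sub]

theorem aux_mem_limitSet (x : M) (hx : x ∈ U) : x ∈ limitSet I U :=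
  ⟨fun _ => x, fun _ => hx, fun k l _ => by simpa using zero_mem _,
    fun n => by simpa using zero_mem _⟩

theorem aux_pow_smul_le (n : ℕ) : (I ^ n • U : Submodule R M) ≤ U :=
  smul_le_right

theorem aux_decomp [IsPrecomplete I M] (S : Finset R) (hS : Ideal.span (S : Set R) = I)
    (f : ℕ → M) (hfU : ∀ n, f n ∈ U)
    (hfC : ∀ k l, k ≤ l → f l - f k ∈ (I ^ k • U : Submodule R M)) :
    ∃ (x : R → M) (g : R → ℕ → M),
      (∀ a, x a ∈ limitSet I U) ∧ (∀ a n, g a n ∈ U) ∧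
      (∀ a k l, k ≤ l → g a l - g a k ∈ (I ^ k • U : Submodule R M)) ∧
      (∀ a n, g a n - x a ∈ (I ^ n • (⊤ : Submodule R M))) ∧
      (∀ n, f (n + 1) - f 1 = ∑ a ∈ S, a • g a n) := by
  have hd : ∀ n : ℕ, f (n + 2) - f (n + 1) ∈ Ideal.span (S : Set R) • (I ^ n • U : Submodule R M) := by
    intro n
    rw [hS]
    have h1 : f (n + 2) - f (n + 1) ∈ (I ^ (n + 1) • U : Submodule R M) :=
      hfC (n + 1) (n + 2) (by omega)
    rwa [pow_succ', ← smul_eq_mul, Submodule.smul_assoc] at h1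
  choose v hv1 hv2 using fun n => aux_smul_decomp S _ _ (hd n)
  set g : R → ℕ → M := fun a K => ∑ k ∈ Finset.range K, v k a with hg
  have hgU : ∀ a n, g a n ∈ U := fun a n =>
    sum_mem fun k _ => aux_pow_smul_le I U k (hv1 k a)
  have hgC : ∀ a k l, k ≤ l → g a l - g a k ∈ (I ^ k • U : Submodule R M) := by
    intro a k l h
    have : g a l - g a k = ∑ i ∈ Finset.Ico k l, v i a := by
      rw [hg]
      exact (Finset.sum_Ico_eq_sub _ h).symm
    rw [this]
    exact sum_mem fun i hi =>
      smul_mono_left (Ideal.pow_le_pow_right (Finset.mem_Ico.mp hi).1) (hv1 i a)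
  have hpre : ∀ a : R, ∃ L : M, ∀ n, g a n ≡ L [SMOD (I ^ n • (⊤ : Submodule R M))] := by
    intro a
    refine IsPrecomplete.prec ‹IsPrecomplete I M› ?_
    intro k l h
    rw [SModEq.sub_mem]
    have := hgC a k l h
    have h2 : g a k - g a l = -(g a l - g a k) := by abel
    rw [h2]
    exact Submodule.smul_mono le_rfl le_top (neg_mem this)
  choose x hx using hpre
  refine ⟨x, g, ?_, hgU, hgC, ?_, ?_⟩
  · intro a
    refine ⟨g a, hgU a, hgC a, fun n => ?_⟩
    have := SModEq.sub_mem.mp (hx a n)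
    have h2 : x a - g a n = -(g a n - x a) := by abel
    rw [h2]
    exact neg_mem this
  · intro a n
    exact SModEq.sub_mem.mp (hx a n)
  · intro n
    have htel : f (n + 1) - f 1 = ∑ k ∈ Finset.range n, (f (k + 2) - f (k + 1)) := by
      rw [Finset.sum_range_sub (fun k => f (k + 1))]
    rw [htel]
    calc ∑ k ∈ Finset.range n, (f (k + 2) - f (k + 1))
        = ∑ k ∈ Finset.range n, ∑ a ∈ S, a • v k a := by
          exact Finset.sum_congr rfl fun k _ => hv2 k
      _ = ∑ a ∈ S, ∑ k ∈ Finset.range n, a • v k a := Finset.sum_comm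
      _ = ∑ a ∈ S, a • g a n := by
          exact Finset.sum_congr rfl fun a _ => (Finset.smul_sum).symm

theorem aux_limitSet_le [IsPrecomplete I M] [IsHausdorff I M] (S : Finset R)
    (hS : Ideal.span (S : Set R) = I) :
    limitSet I U ≤ I • limitSet I U ⊔ U := by
  intro z hz
  obtain ⟨f, hf1, hf2, hf3⟩ := hz
  obtain ⟨x, g, hxT, hgU, hgC, hgx, hsum⟩ := aux_decomp I U S hS f hf1 hf2
  have hz0 : z = (∑ a ∈ S, a • x a) + f 1 := by
    have h0 : z - ((∑ a ∈ S, a • x a) + f 1) = 0 := by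
      refine IsHausdorff.haus ‹IsHausdorff I M› _ fun n => SModEq.zero.mpr ?_
      have heq : z - ((∑ a ∈ S, a • x a) + f 1) =
          (z - f (n + 1)) + ∑ a ∈ S, a • (g a n - x a) := by
        have h2 : ∑ a ∈ S, a • (g a n - x a) =
            (f (n + 1) - f 1) - ∑ a ∈ S, a • x a := by
          simp only [smul_sub, Finset.sum_sub_distrib, ← hsum n]
        rw [h2]
        abel
      rw [heq]
      refine add_mem ?_ (sum_mem fun a _ => Submodule.smul_mem _ _ (hgx a n))
      exact smul_mono_left (Ideal.pow_le_pow_right (Nat.le_succ n)) (hf3 (n + 1))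
    exact (sub_eq_zero.mp h0)
  rw [hz0]
  refine add_mem_sup (sum_mem fun a ha => ?_) (hf1 1)
  exact smul_mem_smul (hS ▸ subset_span ha) (hxT a)

theorem aux_B [IsPrecomplete I M] [IsHausdorff I M] (S : Finset R)
    (hS : Ideal.span (S : Set R) = I) (hT : limitSet I U ≤ U) :
    ∀ (j : ℕ) (u : ℕ → M), (∀ n, u n ∈ U) →
      (∀ n, u n ∈ (I ^ n • (⊤ : Submodule R M))) →
      (∀ k l, k ≤ l → u l - u k ∈ (I ^ k • U : Submodule R M)) →
      ∀ n, u n ∈ (I ^ j • U ⊔ I ^ n • U : Submodule R M) := by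
  intro j
  induction j with
  | zero =>
    intro u hu1 _ _ n
    refine mem_sup_left ?_
    rw [pow_zero, Ideal.one_eq_top, top_smul]
    exact hu1 n
  | succ j ih =>
    intro u hu1 hu2 hu3 n
    obtain ⟨x, g, hxT, hgU, hgC, hgx, hsum⟩ := aux_decomp I U S hS u hu1 hu3
    have hxU : ∀ a, x a ∈ U := fun a => hT (hxT a)
    have hkey : ∀ m, u (m + 1) = ∑ a ∈ S, a • (g a m - x a) := by
      have hc : u 1 + ∑ a ∈ S, a • x a = 0 := by
        refine IsHausdorff.haus ‹IsHausdorff I M› _ fun m => SModEq.zero.mpr ?_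
        have heq : u 1 + ∑ a ∈ S, a • x a =
            u (m + 1) - ∑ a ∈ S, a • (g a m - x a) := by
          have h2 : ∑ a ∈ S, a • (g a m - x a) =
              (u (m + 1) - u 1) - ∑ a ∈ S, a • x a := by
            simp only [smul_sub, Finset.sum_sub_distrib, ← hsum m]
          rw [h2]
          abel
        rw [heq]
        refine sub_mem ?_ (sum_mem fun a _ => Submodule.smul_mem _ _ (hgx a m))
        exact smul_mono_left (Ideal.pow_le_pow_right (Nat.le_succ m)) (hu2 (m + 1))
      intro m
      have h2 : ∑ a ∈ S, a • (g a m - x a) =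
          (u (m + 1) - u 1) - ∑ a ∈ S, a • x a := by
        simp only [smul_sub, Finset.sum_sub_distrib, ← hsum m]
      have h4 : (u (m + 1) - u 1) - ∑ a ∈ S, a • x a =
          u (m + 1) - (u 1 + ∑ a ∈ S, a • x a) := by abel
      rw [h2, h4, hc, sub_zero]
    match n with
    | 0 =>
      refine mem_sup_right ?_
      rw [pow_zero, Ideal.one_eq_top, top_smul]
      exact hu1 0
    | n + 1 =>
      rw [hkey n]
      refine sum_mem fun a ha => ?_
      have hw : g a n - x a ∈ (I ^ j • U ⊔ I ^ n • U : Submodule R M) := by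
        refine ih (fun m => g a m - x a) (fun m => sub_mem (hgU a m) (hxU a))
          (hgx a) (fun k l h => ?_) n
        have : (g a l - x a) - (g a k - x a) = g a l - g a k := by abel
        rw [this]
        exact hgC a k l h
      have h3 : a • (g a n - x a) ∈ I • (I ^ j • U ⊔ I ^ n • U : Submodule R M) :=
        smul_mem_smul (hS ▸ subset_span ha) hw
      rwa [Submodule.smul_sup, ← Submodule.smul_assoc, ← Submodule.smul_assoc,
        smul_eq_mul, smul_eq_mul, ← pow_succ', ← pow_succ'] at h3

theorem aux_mp [IsHausdorff I M] (hU : IsPrecomplete I ↥U) (V : Submodule R M)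
    (hV : V ≤ I • V ⊔ U) : V ≤ U := by
  intro x hx
  have hstep : ∀ (n : ℕ) (y : M), y ∈ (I ^ n • V : Submodule R M) →
      ∃ p : M × M, p.1 ∈ (I ^ (n + 1) • V : Submodule R M) ∧
        p.2 ∈ (I ^ n • U : Submodule R M) ∧ y = p.1 + p.2 := by
    intro n y hy
    have h1 : (I ^ n • V : Submodule R M) ≤ I ^ (n + 1) • V ⊔ I ^ n • U := by
      calc (I ^ n • V : Submodule R M) ≤ I ^ n • (I • V ⊔ U) :=
            Submodule.smul_mono le_rfl hV
        _ = I ^ (n + 1) • V ⊔ I ^ n • U := by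
            rw [Submodule.smul_sup, ← Submodule.smul_assoc, smul_eq_mul, ← pow_succ]
    obtain ⟨p1, hp1, p2, hp2, hp⟩ := mem_sup.mp (h1 hy)
    exact ⟨(p1, p2), hp1, hp2, hp.symm⟩
  choose! F h1 h2 h3 using hstep
  let seq : ∀ n : ℕ, {y : M // y ∈ (I ^ n • V : Submodule R M)} := fun n =>
    Nat.rec ⟨x, by rw [pow_zero, Ideal.one_eq_top, top_smul]; exact hx⟩
      (fun n p => ⟨(F n p.1).1, h1 n p.1 p.2⟩) n
  set u : ℕ → M := fun n => x - (seq n).1 with hu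
  have hdiff : ∀ n, u (n + 1) - u n ∈ (I ^ n • U : Submodule R M) := by
    intro n
    have h3' := h3 n (seq n).1 (seq n).2
    have hs : (seq (n + 1)).1 = (F n (seq n).1).1 := rfl
    have heq : u (n + 1) - u n = (F n (seq n).1).2 := by
      calc u (n + 1) - u n = (seq n).1 - (seq (n + 1)).1 := by
            simp only [hu]; abel
        _ = ((F n (seq n).1).1 + (F n (seq n).1).2) - (F n (seq n).1).1 := by
            rw [hs, ← h3']
        _ = (F n (seq n).1).2 := by abel
    rw [heq]
    exact h2 n (seq n).1 (seq n).2
  have huU : ∀ n, u n ∈ U := by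
    intro n
    induction n with
    | zero =>
      have h0 : (seq 0).1 = x := rfl
      simp only [hu, h0, sub_self]
      exact zero_mem U
    | succ n ihn =>
      have : u (n + 1) = u n + (u (n + 1) - u n) := by abel
      rw [this]
      exact add_mem ihn (aux_pow_smul_le I U n (hdiff n))
  have hC : ∀ k l, k ≤ l → u l - u k ∈ (I ^ k • U : Submodule R M) := by
    intro k l h
    induction l, h using Nat.le_induction with
    | base => simpa using zero_mem _
    | succ l hkl ihl =>
      have : u (l + 1) - u k = (u l - u k) + (u (l + 1) - u l) := by abel
      rw [this]
      exact add_mem ihl (smul_mono_left (Ideal.pow_le_pow_right hkl) (hdiff l))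
  set v : ℕ → ↥U := fun n => ⟨u n, huU n⟩ with hv
  have hvC : ∀ {k l}, k ≤ l → v k ≡ v l [SMOD (I ^ k • ⊤ : Submodule R ↥U)] := by
    intro k l h
    rw [SModEq.sub_mem, Submodule.mem_smul_top_iff]
    have : ((v k - v l : ↥U) : M) = -(u l - u k) := by
      simp only [hv, AddSubgroupClass.coe_sub]
      abel
    rw [this]
    exact neg_mem (hC k l h)
  obtain ⟨L, hL⟩ := hU.prec hvC
  have hx_eq : x = (L : M) := by
    rw [← sub_eq_zero]
    refine IsHausdorff.haus ‹IsHausdorff I M› _ fun n => SModEq.zero.mpr ?_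
    have heq : x - (L : M) = (seq n).1 + (u n - (L : M)) := by
      simp only [hu]
      abel
    rw [heq]
    refine add_mem (Submodule.smul_mono le_rfl le_top (seq n).2) ?_
    have hm := SModEq.sub_mem.mp (hL n)
    rw [Submodule.mem_smul_top_iff] at hm
    have hcoe : ((v n - L : ↥U) : M) = u n - (L : M) := by simp [hv]
    rw [hcoe] at hm
    exact Submodule.smul_mono le_rfl le_top hm
  rw [hx_eq]
  exact L.2


end Aux

theorem submodule_complete_iff_quotient_reduced
    (R : Type u) [CommRing R] [IsNoetherianRing R] [IsLocalRing R]
    (M : Type v) [AddCommGroup M] [Module R M]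
    [IsAdicComplete (maximalIdeal R) M] (U : Submodule R M) :
    IsAdicComplete (maximalIdeal R) U ↔
      ∀ W : Submodule R (M ⧸ U), maximalIdeal R • W = W → W = ⊥ := by
  obtain ⟨S, hS⟩ := IsNoetherian.noetherian (maximalIdeal R)
  have hH : IsHausdorff (maximalIdeal R) M := inferInstance
  have hP : IsPrecomplete (maximalIdeal R) M := inferInstance
  have hmapU : Submodule.map U.mkQ U = ⊥ := by
    rw [eq_bot_iff]
    rintro y ⟨z, hz, rfl⟩
    simpa using (Submodule.Quotient.mk_eq_zero U).mpr hz
  constructor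
  · intro hc W hW
    set V := Submodule.comap U.mkQ W with hVdef
    have hmap : Submodule.map U.mkQ V = W :=
      Submodule.map_comap_eq_self (by rw [Submodule.range_mkQ]; exact le_top)
    have hV2 : V ≤ maximalIdeal R • V ⊔ U := by
      have hIm : Submodule.map U.mkQ (maximalIdeal R • V) = W := by
        rw [Submodule.map_smul'', hmap, hW]
      calc V ≤ Submodule.comap U.mkQ (Submodule.map U.mkQ (maximalIdeal R • V)) := by
            rw [hIm]
        _ = maximalIdeal R • V ⊔ LinearMap.ker U.mkQ := Submodule.comap_map_eq _ _
        _ = maximalIdeal R • V ⊔ U := by rw [Submodule.ker_mkQ]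
    have hVU : V ≤ U := aux_mp (maximalIdeal R) U hc.toIsPrecomplete V hV2
    rw [← hmap, eq_bot_iff, ← hmapU]
    exact Submodule.map_mono hVU
  · intro hred
    have hT : limitSet (maximalIdeal R) U ≤ U := by
      have h1 := aux_limitSet_le (maximalIdeal R) U S hS
      set W := Submodule.map U.mkQ (limitSet (maximalIdeal R) U) with hW
      have hWrf : maximalIdeal R • W = W := by
        refine le_antisymm smul_le_right ?_
        calc W ≤ Submodule.map U.mkQ
              (maximalIdeal R • limitSet (maximalIdeal R) U ⊔ U) := Submodule.map_mono h1
          _ = maximalIdeal R • W ⊔ Submodule.map U.mkQ U := by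
              rw [Submodule.map_sup, Submodule.map_smul'']
          _ = maximalIdeal R • W := by rw [hmapU, sup_bot_eq]
      have hWbot := hred W hWrf
      intro z hz
      have hzW : U.mkQ z ∈ W := Submodule.mem_map_of_mem hz
      rw [hWbot, Submodule.mem_bot] at hzW
      exact (Submodule.Quotient.mk_eq_zero U).mp hzW
    refine { toIsHausdorff := ⟨?_⟩, toIsPrecomplete := ⟨?_⟩ }
    · -- Hausdorff
      intro x hx
      refine Subtype.ext ?_
      refine IsHausdorff.haus hH (x : M) fun n => SModEq.zero.mpr ?_
      have := SModEq.zero.mp (hx n)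
      rw [Submodule.mem_smul_top_iff] at this
      exact Submodule.smul_mono le_rfl le_top this
    · -- Precomplete
      intro f hf
      set F : ℕ → M := fun n => ((f n : ↥U) : M) with hF
      have hFC : ∀ k l, k ≤ l → F l - F k ∈ (maximalIdeal R ^ k • U : Submodule R M) := by
        intro k l h
        have h1 := SModEq.sub_mem.mp (hf h)
        rw [Submodule.mem_smul_top_iff] at h1
        have hcoe : ((f k - f l : ↥U) : M) = -(F l - F k) := by
          simp only [hF, AddSubgroupClass.coe_sub]
          abel
        rw [hcoe] at h1
        simpa using neg_mem h1
      obtain ⟨L, hL⟩ := hP.prec (f := F) (by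
        intro k l h
        rw [SModEq.sub_mem]
        have h2 : F k - F l = -(F l - F k) := by abel
        rw [h2]
        exact Submodule.smul_mono le_rfl le_top (neg_mem (hFC k l h)))
      have hLT : L ∈ limitSet (maximalIdeal R) U := by
        refine ⟨F, fun n => (f n).2, hFC, fun n => ?_⟩
        have := SModEq.sub_mem.mp (hL n)
        have h2 : L - F n = -(F n - L) := by abel
        rw [h2]
        exact neg_mem this
      have hLU : L ∈ U := hT hLT
      have hfin : ∀ n, F n - L ∈ (maximalIdeal R ^ n • U : Submodule R M) := by
        intro n
        have := aux_B (maximalIdeal R) U S hS hT n (fun m => F m - L)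
          (fun m => sub_mem (f m).2 hLU)
          (fun m => SModEq.sub_mem.mp (hL m))
          (fun k l h => by
            have h2 : (F l - L) - (F k - L) = F l - F k := by abel
            rw [h2]
            exact hFC k l h) n
        simpa [sup_idem] using this
      refine ⟨⟨L, hLU⟩, fun n => ?_⟩
      rw [SModEq.sub_mem, Submodule.mem_smul_top_iff]
      have hcoe : ((f n - ⟨L, hLU⟩ : ↥U) : M) = F n - L := by
        simp only [hF, AddSubgroupClass.coe_sub]
      rw [hcoe]
      exact hfin n
end

section
/- Let (R, m) be a commutative Noetherian local ring and let M ⊆ N be a pure-injective hull of the R-module M. Then Koatt(N) = Koatt(M). -/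
open IsLocalRing TensorProduct

universe u v w x

/-- A linear map `f : A → B` is pure if `X ⊗ f` is injective for every
finitely generated `R`-module `X`. -/
def IsPureMap {R : Type u} [CommRing R] {A : Type v} {B : Type w}
    [AddCommGroup A] [Module R A] [AddCommGroup B] [Module R B] (f : A →ₗ[R] B) : Prop :=
  ∀ (X : Type u) [AddCommGroup X] [Module R X], Module.Finite R X →
    Function.Injective (LinearMap.lTensor X f)

/-- A submodule is pure if its inclusion is a pure map. -/
def IsPureSubmodule {R : Type u} [CommRing R] {B : Type v} [AddCommGroup B] [Module R B]
    (A : Submodule R B) : Prop :=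
  IsPureMap A.subtype

/-- A pure submodule `A ⊆ B` is pure-essential if for every submodule `X` with `X ⊓ A = ⊥`
such that `(X + A)/X` is pure in `B/X`, one has `X = ⊥`. -/
def IsPureEssential {R : Type u} [CommRing R] {B : Type v} [AddCommGroup B] [Module R B]
    (A : Submodule R B) : Prop :=
  IsPureSubmodule A ∧
    ∀ X : Submodule R B, X ⊓ A = ⊥ → IsPureSubmodule (A.map X.mkQ) → X = ⊥

/-- `N` is pure-injective if every pure embedding of `N` into another module splits. -/
def IsPureInjective (R : Type u) [CommRing R] (N : Type v) [AddCommGroup N] [Module R N] : Prop :=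
  ∀ (B : Type w) [AddCommGroup B] [Module R B] (ι : N →ₗ[R] B), IsPureMap ι →
    ∃ π : B →ₗ[R] N, π ∘ₗ ι = LinearMap.id

/-- `ι : M → N` is a pure-injective hull: a pure-essential extension with `N` pure-injective. -/
def IsPureInjectiveHull {R : Type u} [CommRing R] {M : Type v} {N : Type w}
    [AddCommGroup M] [Module R M] [AddCommGroup N] [Module R N] (ι : M →ₗ[R] N) : Prop :=
  Function.Injective ι ∧ IsPureMap ι ∧ IsPureEssential (LinearMap.range ι) ∧
    IsPureInjective.{u, w, x} R N

section Aux

variable {R : Type u} [CommRing R]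

/-- The `p`-torsion submodule. -/
def torsSub (p : Ideal R) (L : Type*) [AddCommGroup L] [Module R L] : Submodule R L where
  carrier := {n | ∀ a ∈ p, a • n = 0}
  zero_mem' := by intro a _; simp
  add_mem' := by intro x y hx hy a ha; rw [smul_add, hx a ha, hy a ha, add_zero]
  smul_mem' := by intro c x hx a ha; rw [smul_comm, hx a ha, smul_zero]

lemma mem_torsSub {p : Ideal R} {L : Type*} [AddCommGroup L] [Module R L] {x : L} :
    x ∈ torsSub p L ↔ ∀ a ∈ p, a • x = 0 := Iff.rfl

variable {M : Type v} {N : Type w} [AddCommGroup M] [Module R M] [AddCommGroup N] [Module R N]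

lemma rT_rT {A B C W : Type*} [AddCommGroup A] [Module R A] [AddCommGroup B] [Module R B]
    [AddCommGroup C] [Module R C] [AddCommGroup W] [Module R W]
    (f : B →ₗ[R] C) (g : A →ₗ[R] B) (z : A ⊗[R] W) :
    LinearMap.rTensor W f (LinearMap.rTensor W g z) = LinearMap.rTensor W (f ∘ₗ g) z := by
  rw [LinearMap.rTensor_comp, LinearMap.comp_apply]

lemma rT_lT {A B P Q : Type*} [AddCommGroup A] [Module R A] [AddCommGroup B] [Module R B]
    [AddCommGroup P] [Module R P] [AddCommGroup Q] [Module R Q]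
    (f : A →ₗ[R] B) (g : P →ₗ[R] Q) (z : A ⊗[R] P) :
    LinearMap.rTensor Q f (LinearMap.lTensor A g z) = LinearMap.lTensor B g (LinearMap.rTensor P f z) := by
  rw [← LinearMap.comp_apply, LinearMap.rTensor_comp_lTensor, ← LinearMap.comp_apply,
    LinearMap.lTensor_comp_rTensor]

lemma smul_tensor_tors_eq_zero {p : Ideal R} {a : R} (ha : a ∈ p)
    {W : Type*} [AddCommGroup W] [Module R W] (z : W ⊗[R] (torsSub p N)) : a • z = 0 := by
  induction z using TensorProduct.induction_on with
  | zero => simp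
  | tmul x y =>
      have hy : a • y = (0 : torsSub p N) := Subtype.ext (by simpa using y.2 a ha)
      rw [← tmul_smul, hy, tmul_zero]
  | add z1 z2 h1 h2 => rw [smul_add, h1, h2, add_zero]

lemma prod_tensor_recon {G₁ G₂ : Type*} [AddCommGroup G₁] [Module R G₁]
    [AddCommGroup G₂] [Module R G₂] {W : Type*} [AddCommGroup W] [Module R W]
    (z : (G₁ × G₂) ⊗[R] W) :
    LinearMap.rTensor W (LinearMap.inl R G₁ G₂) (LinearMap.rTensor W (LinearMap.fst R G₁ G₂) z)
      + LinearMap.rTensor W (LinearMap.inr R G₁ G₂)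
        (LinearMap.rTensor W (LinearMap.snd R G₁ G₂) z) = z := by
  induction z using TensorProduct.induction_on with
  | zero => simp
  | tmul x y =>
      simp only [LinearMap.rTensor_tmul, LinearMap.fst_apply, LinearMap.snd_apply,
        LinearMap.inl_apply, LinearMap.inr_apply, ← add_tmul, Prod.mk_add_mk, add_zero, zero_add]
  | add z1 z2 h1 h2 =>
      rw [map_add, map_add, map_add, map_add]
      rw [add_add_add_comm, h1, h2]

lemma prod_tensor_ext {G₁ G₂ : Type*} [AddCommGroup G₁] [Module R G₁]
    [AddCommGroup G₂] [Module R G₂] {W : Type*} [AddCommGroup W] [Module R W]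
    {z z' : (G₁ × G₂) ⊗[R] W}
    (h1 : LinearMap.rTensor W (LinearMap.fst R G₁ G₂) z
        = LinearMap.rTensor W (LinearMap.fst R G₁ G₂) z')
    (h2 : LinearMap.rTensor W (LinearMap.snd R G₁ G₂) z
        = LinearMap.rTensor W (LinearMap.snd R G₁ G₂) z') : z = z' := by
  rw [← prod_tensor_recon z, ← prod_tensor_recon z', h1, h2]

lemma pi_tensor_recon {k : ℕ} {W : Type*} [AddCommGroup W] [Module R W]
    (z : (Fin k → R) ⊗[R] W) :
    ∑ i, LinearMap.rTensor W ((LinearMap.single R (fun _ : Fin k => R) i) ∘ₗ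
      (LinearMap.proj i)) z = z := by
  induction z using TensorProduct.induction_on with
  | zero => simp
  | tmul y m =>
      simp only [LinearMap.rTensor_tmul, LinearMap.comp_apply, LinearMap.proj_apply,
        LinearMap.coe_single]
      rw [← sum_tmul, Finset.univ_sum_single]
  | add z1 z2 h1 h2 =>
      simp only [map_add, Finset.sum_add_distrib, h1, h2]

lemma smul_eq_zero_of_components {k s : ℕ} (a : Fin s → R) (r : R)
    (hM : ∀ m : M, (∀ u, a u • m = 0) → r • m = 0)
    (z : (Fin k → R) ⊗[R] M) (hz : ∀ u, a u • z = 0) : r • z = 0 := by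
  rw [← pi_tensor_recon (r • z)]
  apply Finset.sum_eq_zero
  intro i _
  have hζ : LinearMap.rTensor M (LinearMap.proj i : (Fin k → R) →ₗ[R] R) (r • z) = 0 := by
    have hm : ∀ u, a u • (TensorProduct.lid R M (LinearMap.rTensor M (LinearMap.proj i) z)) = 0 := by
      intro u
      rw [← map_smul, ← map_smul, hz u, map_zero, map_zero]
    have h1 := hM _ hm
    have h2 : TensorProduct.lid R M (LinearMap.rTensor M (LinearMap.proj i) (r • z)) = 0 := by
      rw [map_smul, map_smul]; exact h1
    exact (LinearEquiv.map_eq_zero_iff _).mp h2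
  rw [← rT_rT, hζ, map_zero]

lemma pi_smul_tensor_tors_eq_zero {p : Ideal R} {k s : ℕ} (a : Fin s → R) (hap : ∀ u, a u ∈ p)
    (z : (Fin k → R) ⊗[R] (torsSub p N)) :
    LinearMap.rTensor (torsSub p N)
      (LinearMap.pi fun u : Fin s => ((a u) • (LinearMap.id : (Fin k → R) →ₗ[R] (Fin k → R)))) z
      = 0 := by
  induction z using TensorProduct.induction_on with
  | zero => simp
  | tmul y n =>
      rw [LinearMap.rTensor_tmul]
      have h1 : (LinearMap.pi fun u : Fin s =>
          ((a u) • (LinearMap.id : (Fin k → R) →ₗ[R] (Fin k → R)))) y = fun u => a u • y := rfl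
      have h2 : ((fun u => a u • y) : Fin s → Fin k → R)
          = ∑ u, Pi.single u (a u • y) := (Finset.univ_sum_single _).symm
      rw [h1, h2, sum_tmul]
      apply Finset.sum_eq_zero
      intro u _
      have hn : a u • n = (0 : torsSub p N) := Subtype.ext (by simpa using n.2 (a u) (hap u))
      rw [Pi.single_smul, smul_tmul, hn, tmul_zero]
  | add z1 z2 h1 h2 => rw [map_add, h1, h2, add_zero]

end Aux

section Descent

variable {R : Type u} [CommRing R]
variable {M : Type v} {N : Type w} [AddCommGroup M] [Module R M] [AddCommGroup N] [Module R N]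

lemma lemD {F G : Type u} [AddCommGroup F] [Module R F] [AddCommGroup G] [Module R G]
    [Module.Finite R G]
    {ι : M →ₗ[R] N} (hpure : IsPureMap ι) (g : F →ₗ[R] G) (t : G ⊗[R] M)
    (ht : LinearMap.lTensor G ι t ∈ LinearMap.range (LinearMap.rTensor N g)) :
    t ∈ LinearMap.range (LinearMap.rTensor M g) := by
  obtain ⟨u, hu⟩ := ht
  have hqsurj : Function.Surjective (LinearMap.range g).mkQ := Submodule.mkQ_surjective _
  have hexact : Function.Exact g (LinearMap.range g).mkQ := by
    rw [LinearMap.exact_iff, Submodule.ker_mkQ]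
  have hfin : Module.Finite R (G ⧸ LinearMap.range g) :=
    Module.Finite.of_surjective (LinearMap.range g).mkQ hqsurj
  have hMex : Function.Exact (LinearMap.rTensor M g) (LinearMap.rTensor M (LinearMap.range g).mkQ) :=
    rTensor_exact M hexact hqsurj
  have key : LinearMap.rTensor M (LinearMap.range g).mkQ t = 0 := by
    apply hpure _ hfin
    rw [map_zero, ← rT_lT]
    rw [← hu, rT_rT]
    have hz : (LinearMap.range g).mkQ ∘ₗ g = 0 := by
      apply LinearMap.ext; intro x
      simp [Submodule.Quotient.mk_eq_zero]
    rw [hz, LinearMap.rTensor_zero, LinearMap.zero_apply]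
  obtain ⟨s0, hs0⟩ := (hMex t).mp key
  exact ⟨s0, hs0⟩

lemma lemE [IsNoetherianRing R] {ι : M →ₗ[R] N} (hpure : IsPureMap ι) (p : Ideal R) (r : R)
    (hM : ∀ m : M, (∀ a ∈ p, a • m = 0) → r • m = 0)
    (Y : Type u) [AddCommGroup Y] [Module R Y] [Module.Finite R Y]
    (t : Y ⊗[R] M)
    (ht : LinearMap.lTensor Y ι t ∈
      LinearMap.range (LinearMap.lTensor Y (r • (torsSub p N).subtype))) :
    t = 0 := by
  classical
  obtain ⟨w, hw⟩ := ht
  -- generators of p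
  obtain ⟨s, a, ha⟩ := Submodule.fg_iff_exists_fin_generating_family.mp
    (IsNoetherian.noetherian (p : Submodule R R))
  have hap : ∀ u, a u ∈ p := fun u => ha ▸ Submodule.subset_span ⟨u, rfl⟩
  have hM' : ∀ m : M, (∀ u, a u • m = 0) → r • m = 0 := by
    intro m h
    refine hM m ?_
    intro b hb
    rw [← ha] at hb
    induction hb using Submodule.span_induction with
    | mem x hx => obtain ⟨u, rfl⟩ := hx; exact h u
    | zero => rw [zero_smul]
    | add x y hx hy ihx ihy => rw [add_smul, ihx, ihy, add_zero]
    | smul c x hx ih => rw [smul_assoc, ih, smul_zero]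
  -- presentation of Y
  obtain ⟨k, q, hq⟩ := Module.Finite.exists_fin' R Y
  obtain ⟨l, sg, hsg⟩ := Submodule.fg_iff_exists_fin_generating_family.mp
    (IsNoetherian.noetherian (LinearMap.ker q))
  set g0 : (Fin l → R) →ₗ[R] (Fin k → R) := Fintype.linearCombination R sg with hg0
  have hrange : LinearMap.range g0 = LinearMap.ker q := by
    rw [hg0, Fintype.range_linearCombination, hsg]
  have hexact : Function.Exact g0 q := LinearMap.exact_iff.mpr hrange.symm
  -- lift t and w
  obtain ⟨t₀, ht₀⟩ := LinearMap.rTensor_surjective M hq t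
  obtain ⟨w₀, hw₀⟩ := LinearMap.rTensor_surjective (torsSub p N) hq w
  set y₀ : (Fin k → R) ⊗[R] N := LinearMap.lTensor (Fin k → R) (torsSub p N).subtype w₀ with hy₀
  have hw' : LinearMap.lTensor Y ι t = r • LinearMap.lTensor Y (torsSub p N).subtype w := by
    rw [← hw, LinearMap.lTensor_smul, LinearMap.smul_apply]
  have hker : LinearMap.rTensor N q (LinearMap.lTensor (Fin k → R) ι t₀ - r • y₀) = 0 := by
    rw [map_sub, map_smul, rT_lT, ht₀, hy₀, rT_lT, hw₀, hw', sub_self]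
  obtain ⟨v₀, hv₀⟩ := (rTensor_exact N hexact hq _).mp hker
  -- the big system
  set h₁ : ((Fin k → R) × (Fin l → R)) →ₗ[R] (Fin k → R) :=
    r • (LinearMap.fst R (Fin k → R) (Fin l → R))
      + g0 ∘ₗ (LinearMap.snd R (Fin k → R) (Fin l → R)) with hh₁
  set h₂ : ((Fin k → R) × (Fin l → R)) →ₗ[R] (Fin s → Fin k → R) :=
    LinearMap.pi (fun u : Fin s => (a u) • (LinearMap.fst R (Fin k → R) (Fin l → R))) with hh₂
  set H := h₁.prod h₂ with hH
  set T : ((Fin k → R) × (Fin s → Fin k → R)) ⊗[R] M :=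
    LinearMap.rTensor M (LinearMap.inl R (Fin k → R) (Fin s → Fin k → R)) t₀ with hT
  set U := LinearMap.rTensor N (LinearMap.inl R (Fin k → R) (Fin l → R)) y₀
    + LinearMap.rTensor N (LinearMap.inr R (Fin k → R) (Fin l → R)) v₀ with hU
  have hC : LinearMap.rTensor N H U
      = LinearMap.lTensor ((Fin k → R) × (Fin s → Fin k → R)) ι T := by
    apply prod_tensor_ext
    · -- first components
      rw [rT_rT, hT, rT_lT, rT_rT]
      have e1 : (LinearMap.fst R (Fin k → R) (Fin s → Fin k → R)) ∘ₗ
          (LinearMap.inl R (Fin k → R) (Fin s → Fin k → R)) = LinearMap.id :=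
        LinearMap.ext fun y => rfl
      have e2 : (LinearMap.fst R (Fin k → R) (Fin s → Fin k → R)) ∘ₗ H = h₁ :=
        LinearMap.ext fun y => rfl
      rw [e1, e2, LinearMap.rTensor_id, LinearMap.id_apply, hU, map_add, rT_rT, rT_rT]
      have e3 : h₁ ∘ₗ (LinearMap.inl R (Fin k → R) (Fin l → R))
          = r • (LinearMap.id : (Fin k → R) →ₗ[R] (Fin k → R)) :=
        LinearMap.ext fun y => by simp [hh₁]
      have e4 : h₁ ∘ₗ (LinearMap.inr R (Fin k → R) (Fin l → R)) = g0 :=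
        LinearMap.ext fun y => by simp [hh₁]
      rw [e3, e4, LinearMap.rTensor_smul, LinearMap.rTensor_id, LinearMap.smul_apply,
        LinearMap.id_apply, hv₀]
      abel
    · -- second components
      rw [rT_rT, hT, rT_lT, rT_rT]
      have e1 : (LinearMap.snd R (Fin k → R) (Fin s → Fin k → R)) ∘ₗ
          (LinearMap.inl R (Fin k → R) (Fin s → Fin k → R)) = 0 :=
        LinearMap.ext fun y => rfl
      have e2 : (LinearMap.snd R (Fin k → R) (Fin s → Fin k → R)) ∘ₗ H = h₂ :=
        LinearMap.ext fun y => rfl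
      rw [e1, e2, LinearMap.rTensor_zero, LinearMap.zero_apply, map_zero, hU, map_add,
        rT_rT, rT_rT]
      have e3 : h₂ ∘ₗ (LinearMap.inl R (Fin k → R) (Fin l → R))
          = LinearMap.pi (fun u : Fin s =>
              (a u) • (LinearMap.id : (Fin k → R) →ₗ[R] (Fin k → R))) :=
        LinearMap.ext fun y => rfl
      have e4 : h₂ ∘ₗ (LinearMap.inr R (Fin k → R) (Fin l → R)) = 0 :=
        LinearMap.ext fun y => by
          simp only [LinearMap.comp_apply, LinearMap.zero_apply, hh₂]
          funext u
          simp
      rw [e3, e4, LinearMap.rTensor_zero, LinearMap.zero_apply, add_zero, hy₀, rT_lT,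
        pi_smul_tensor_tors_eq_zero a hap, map_zero]
  obtain ⟨S0, hS0⟩ := lemD hpure H T ⟨U, hC⟩
  set y' := LinearMap.rTensor M (LinearMap.fst R (Fin k → R) (Fin l → R)) S0 with hy'
  set v' := LinearMap.rTensor M (LinearMap.snd R (Fin k → R) (Fin l → R)) S0 with hv'
  -- extract component equations
  have c1 : t₀ = r • y' + LinearMap.rTensor M g0 v' := by
    have := congrArg (LinearMap.rTensor M (LinearMap.fst R (Fin k → R) (Fin s → Fin k → R))) hS0
    rw [rT_rT, rT_rT] at this
    have e2 : (LinearMap.fst R (Fin k → R) (Fin s → Fin k → R)) ∘ₗ H = h₁ :=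
      LinearMap.ext fun y => rfl
    have e1 : (LinearMap.fst R (Fin k → R) (Fin s → Fin k → R)) ∘ₗ
        (LinearMap.inl R (Fin k → R) (Fin s → Fin k → R)) = LinearMap.id :=
      LinearMap.ext fun y => rfl
    rw [e1, e2, LinearMap.rTensor_id, LinearMap.id_apply, hh₁] at this
    rw [← this, LinearMap.rTensor_add, LinearMap.add_apply, LinearMap.rTensor_smul,
      LinearMap.smul_apply, LinearMap.rTensor_comp, LinearMap.comp_apply]
  have c2 : ∀ u : Fin s, a u • y' = 0 := by
    intro u
    have := congrArg (LinearMap.rTensor M ((LinearMap.proj u :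
      (Fin s → Fin k → R) →ₗ[R] (Fin k → R)) ∘ₗ (LinearMap.snd R (Fin k → R) (Fin s → Fin k → R)))) hS0
    rw [rT_rT, rT_rT] at this
    have e1 : ((LinearMap.proj u : (Fin s → Fin k → R) →ₗ[R] (Fin k → R)) ∘ₗ
        (LinearMap.snd R (Fin k → R) (Fin s → Fin k → R))) ∘ₗ H
        = (a u) • (LinearMap.fst R (Fin k → R) (Fin l → R)) :=
      LinearMap.ext fun y => rfl
    have e2 : ((LinearMap.proj u : (Fin s → Fin k → R) →ₗ[R] (Fin k → R)) ∘ₗ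
        (LinearMap.snd R (Fin k → R) (Fin s → Fin k → R))) ∘ₗ
        (LinearMap.inl R (Fin k → R) (Fin s → Fin k → R)) = 0 :=
      LinearMap.ext fun y => rfl
    rw [e1, e2, LinearMap.rTensor_zero, LinearMap.zero_apply, LinearMap.rTensor_smul,
      LinearMap.smul_apply] at this
    exact this
  have hr' : r • y' = 0 := smul_eq_zero_of_components a r hM' y' c2
  rw [← ht₀, c1, map_add, hr', map_zero, zero_add, rT_rT]
  have hqg : q ∘ₗ g0 = 0 := by
    apply LinearMap.ext; intro x
    have : g0 x ∈ LinearMap.ker q := hrange ▸ LinearMap.mem_range_self g0 x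
    simpa using this
  rw [hqg, LinearMap.rTensor_zero, LinearMap.zero_apply]

end Descent

section Final

variable {R : Type u} [CommRing R]
variable {M : Type v} {N : Type w} [AddCommGroup M] [Module R M] [AddCommGroup N] [Module R N]

lemma purity_quotient [IsNoetherianRing R] {ι : M →ₗ[R] N} (hpure : IsPureMap ι)
    (p : Ideal R) (r : R)
    (hM : ∀ m : M, (∀ a ∈ p, a • m = 0) → r • m = 0) :
    IsPureSubmodule ((LinearMap.range ι).map
      (LinearMap.range (r • (torsSub p N).subtype)).mkQ) := by
  set X := LinearMap.range (r • (torsSub p N).subtype) with hX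
  set σ : M →ₗ[R] (N ⧸ X) := X.mkQ ∘ₗ ι with hσdef
  have hmap : (LinearMap.range ι).map X.mkQ = LinearMap.range σ := (LinearMap.range_comp _ _).symm
  rw [IsPureSubmodule, hmap]
  intro Y _ _ hY
  have hσ : Function.Injective (LinearMap.lTensor Y σ) := by
    rw [injective_iff_map_eq_zero]
    intro t htz
    refine lemE hpure p r hM Y t ?_
    have hEx : Function.Exact (LinearMap.lTensor Y X.subtype) (LinearMap.lTensor Y X.mkQ) :=
      lTensor_exact Y (LinearMap.exact_subtype_mkQ X) (Submodule.mkQ_surjective X)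
    have h0 : LinearMap.lTensor Y X.mkQ (LinearMap.lTensor Y ι t) = 0 := by
      rw [← LinearMap.comp_apply, ← LinearMap.lTensor_comp]
      exact htz
    obtain ⟨z, hz⟩ := (hEx _).mp h0
    obtain ⟨z', hz'⟩ := LinearMap.lTensor_surjective Y
      (LinearMap.surjective_rangeRestrict (r • (torsSub p N).subtype)) z
    refine ⟨z', ?_⟩
    have hcomp : X.subtype ∘ₗ (r • (torsSub p N).subtype).rangeRestrict
        = r • (torsSub p N).subtype := by
      apply LinearMap.ext; intro x; rfl
    rw [← hcomp, LinearMap.lTensor_comp, LinearMap.comp_apply, hz', hz]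
  rw [injective_iff_map_eq_zero]
  intro t htz
  obtain ⟨s0, rfl⟩ := LinearMap.lTensor_surjective Y (LinearMap.surjective_rangeRestrict σ) t
  have hcomp : (LinearMap.range σ).subtype ∘ₗ σ.rangeRestrict = σ := by
    apply LinearMap.ext; intro x; rfl
  have h0 : LinearMap.lTensor Y σ s0 = 0 := by
    rw [← hcomp, LinearMap.lTensor_comp, LinearMap.comp_apply]
    exact htz
  rw [(injective_iff_map_eq_zero _).mp hσ s0 h0, map_zero]

lemma machine [IsNoetherianRing R] {ι : M →ₗ[R] N} (hpure : IsPureMap ι)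
    (hess : ∀ X : Submodule R N, X ⊓ LinearMap.range ι = ⊥ →
      IsPureSubmodule ((LinearMap.range ι).map X.mkQ) → X = ⊥)
    (p : Ideal R) (r : R) (hr : r ∉ p)
    (hM : ∀ m : M, (∀ a ∈ p, a • m = 0) → r • m = 0)
    (hN : (torsSub p N).annihilator = p) : False := by
  have hinf : LinearMap.range (r • (torsSub p N).subtype) ⊓ LinearMap.range ι = ⊥ := by
    rw [eq_bot_iff]
    rintro z hz
    obtain ⟨hz1, hz2⟩ := Submodule.mem_inf.mp hz
    obtain ⟨y, hy⟩ := hz1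
    obtain ⟨m, hm⟩ := hz2
    have h1 : LinearMap.lTensor R ι ((1:R) ⊗ₜ[R] m) ∈
        LinearMap.range (LinearMap.lTensor R (r • (torsSub p N).subtype)) := by
      refine ⟨(1:R) ⊗ₜ y, ?_⟩
      rw [LinearMap.lTensor_tmul, LinearMap.lTensor_tmul, hy, hm]
    have h2 := lemE hpure p r hM R ((1:R) ⊗ₜ m) h1
    have h3 : m = 0 := by
      have := congrArg (TensorProduct.lid R M) h2
      simpa using this
    rw [Submodule.mem_bot, ← hm, h3, map_zero]
  have hbot := hess _ hinf (purity_quotient hpure p r hM)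
  apply hr
  rw [← hN, Submodule.mem_annihilator]
  intro n hn
  have h4 : (r • (torsSub p N).subtype) ⟨n, hn⟩ ∈
      LinearMap.range (r • (torsSub p N).subtype) := ⟨_, rfl⟩
  rw [hbot, Submodule.mem_bot] at h4
  simpa using h4

end Final

theorem koatt_pureInjectiveHull_eq
    (R : Type u) [CommRing R] [IsNoetherianRing R] [IsLocalRing R]
    {M : Type v} {N : Type w} [AddCommGroup M] [Module R M] [AddCommGroup N] [Module R N]
    (ι : M →ₗ[R] N) (hι : IsPureInjectiveHull ι) :
    Koatt R N = Koatt R M := by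
  obtain ⟨hinj, hpure, ⟨hpuresub, hess⟩, hPI⟩ := hι
  ext p
  simp only [Koatt, Set.mem_setOf_eq]
  constructor
  · rintro ⟨hp, U, hU⟩
    refine ⟨hp, torsSub p M, le_antisymm ?_ ?_⟩
    · intro r hr
      by_contra hrp
      have hUle : U ≤ torsSub p N := by
        intro u hu
        intro a ha
        exact Submodule.mem_annihilator.mp (show a ∈ U.annihilator from hU ▸ ha) u hu
      have hN : (torsSub p N).annihilator = p := by
        refine le_antisymm ?_ ?_
        · exact le_of_le_of_eq (Submodule.annihilator_mono hUle) hU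
        · intro a ha
          rw [Submodule.mem_annihilator]
          intro n hn
          exact hn a ha
      have hM : ∀ m : M, (∀ a ∈ p, a • m = 0) → r • m = 0 := by
        intro m h
        exact Submodule.mem_annihilator.mp hr m h
      exact (machine hpure hess p r hrp hM hN).elim
    · intro a ha
      rw [Submodule.mem_annihilator]
      intro m hm
      exact hm a ha
  · rintro ⟨hp, U, hU⟩
    refine ⟨hp, U.map ι, ?_⟩
    rw [← hU]
    ext a
    simp only [Submodule.mem_annihilator]
    constructor
    · intro h u hu
      have h1 := h (ι u) (Submodule.mem_map_of_mem hu)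
      rw [← map_smul, ← map_zero ι] at h1
      exact hinj h1
    · rintro h n hn
      obtain ⟨u, hu, rfl⟩ := hn
      rw [← map_smul, h u hu, map_zero]
end

section
/- Let (R, m) be a commutative Noetherian local ring with Krull dimension dim(R) ≤ 1 and let M be a separated R-module. Then Ass(M̂) = Koatt(M). -/
open IsLocalRing TensorProduct

universe u v w x

section Aux

variable {R : Type u} [CommRing R] [IsNoetherianRing R] [IsLocalRing R]

lemma aux_no_chain (hdim : ringKrullDim R ≤ 1) {q0 q1 q2 : Ideal R}
    (h0 : q0.IsPrime) (h1 : q1.IsPrime) (h2 : q2.IsPrime)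
    (l01 : q0 < q1) (l12 : q1 < q2) : False := by
  let T : LTSeries (PrimeSpectrum R) :=
    { length := 2
      toFun := ![⟨q0, h0⟩, ⟨q1, h1⟩, ⟨q2, h2⟩]
      step := by
        intro i
        fin_cases i
        · exact l01
        · exact l12 }
  have h2le := Order.LTSeries.length_le_krullDim T
  have : (2 : WithBot (WithTop ℕ)) ≤ 1 := le_trans (by exact_mod_cast h2le) hdim
  norm_num at this

lemma aux_minimal (hdim : ringKrullDim R ≤ 1) {p : Ideal R} (hp : p.IsPrime)
    (hpm : p ≠ maximalIdeal R) : p ∈ minimalPrimes R := by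
  rw [minimalPrimes_eq_minimals]
  refine ⟨hp, ?_⟩
  intro q hq hqp
  by_contra hlt
  have hqlt : q < p := lt_of_le_of_ne hqp (fun h => hlt (le_of_eq h.symm))
  have hpmlt : p < maximalIdeal R :=
    lt_of_le_of_ne (le_maximalIdeal hp.ne_top) hpm
  exact aux_no_chain hdim hq hp (maximalIdeal.isMaximal R).isPrime hqlt hpmlt

lemma aux_pow_le (hdim : ringKrullDim R ≤ 1) {p J : Ideal R} (hp : p.IsPrime)
    (hJ : J ≠ ⊤) (hpJ : p < J) :
    ∃ c, maximalIdeal R ^ c ≤ J ∧ 1 ≤ c := by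
  have hrad : maximalIdeal R ≤ J.radical := by
    rw [Ideal.radical_eq_sInf]
    refine le_sInf ?_
    rintro Q ⟨hJQ, hQ⟩
    have hQm : Q = maximalIdeal R := by
      by_contra hQm
      have hpQ : p < Q := lt_of_lt_of_le hpJ hJQ
      have hQlt : Q < maximalIdeal R := lt_of_le_of_ne (le_maximalIdeal hQ.ne_top) hQm
      exact aux_no_chain hdim hp hQ (maximalIdeal.isMaximal R).isPrime hpQ hQlt
    rw [hQm]
  obtain ⟨c, hc⟩ := Ideal.exists_pow_le_of_le_radical_of_fg hrad
    (IsNoetherian.noetherian _)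
  refine ⟨max c 1, le_trans (Ideal.pow_le_pow_right (le_max_left c 1)) hc, le_max_right c 1⟩

lemma aux_s (hdim : ringKrullDim R ≤ 1) :
    ∃ s ∈ maximalIdeal R, ∃ c, maximalIdeal R ^ c ≤ Ideal.span {s} := by
  by_cases hmm : maximalIdeal R ∈ minimalPrimes R
  · -- dimension zero: the maximal ideal is nilpotent
    refine ⟨0, zero_mem _, ?_⟩
    rw [minimalPrimes_eq_minimals] at hmm
    have hnil : maximalIdeal R ≤ nilradical R := by
      rw [nilradical_eq_sInf]
      refine le_sInf ?_
      intro Q hQ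
      haveI : Q.IsPrime := hQ
      have hQm : maximalIdeal R ≤ Q := by
        obtain ⟨q, hqmin, hqQ⟩ := Ideal.exists_minimalPrimes_le (bot_le (a := Q))
        have hqmin' : Minimal Ideal.IsPrime q := by
          have : q ∈ minimalPrimes R := hqmin
          rwa [minimalPrimes_eq_minimals] at this
        have hqm : maximalIdeal R ≤ q :=
          hmm.2 hqmin'.1 (le_maximalIdeal hqmin'.1.ne_top)
        exact le_trans hqm hqQ
      exact hQm
    obtain ⟨k, hk⟩ := IsNoetherianRing.isNilpotent_nilradical R
    refine ⟨k, ?_⟩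
    have : maximalIdeal R ^ k ≤ nilradical R ^ k := Ideal.pow_right_mono hnil k
    rw [hk] at this
    exact le_trans this (by simp)
  · -- dimension one: prime avoidance
    have hfin := minimalPrimes.finite_of_isNoetherianRing R
    classical
    set F : Finset (Ideal R) := hfin.toFinset with hF
    have hnotsub : ¬ ((maximalIdeal R : Set R) ⊆ ⋃ q ∈ (↑F : Set (Ideal R)), ↑q) := by
      rw [Ideal.subset_union_prime ⊤ ⊤ (fun q hq _ _ => ?_)]
      · rintro ⟨q, hqF, hle⟩
        have hqmin : q ∈ minimalPrimes R := by rwa [hF, Set.Finite.mem_toFinset] at hqF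
        have hq : q.IsPrime := by
          rw [minimalPrimes_eq_minimals] at hqmin; exact hqmin.1
        have : q = maximalIdeal R := le_antisymm (le_maximalIdeal hq.ne_top) hle
        exact hmm (this ▸ hqmin)
      · have hqmin : q ∈ minimalPrimes R := by rwa [hF, Set.Finite.mem_toFinset] at hq
        rw [minimalPrimes_eq_minimals] at hqmin; exact hqmin.1
    rw [Set.not_subset] at hnotsub
    obtain ⟨s, hsm, hsnot⟩ := hnotsub
    refine ⟨s, hsm, ?_⟩
    have hrad : maximalIdeal R ≤ (Ideal.span {s}).radical := by
      rw [Ideal.radical_eq_sInf]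
      refine le_sInf ?_
      rintro Q ⟨hsQ, hQ⟩
      haveI : Q.IsPrime := hQ
      obtain ⟨q, hqmin, hqQ⟩ := Ideal.exists_minimalPrimes_le (bot_le (a := Q))
      have hqmin' : q ∈ minimalPrimes R := hqmin
      have hq : q.IsPrime := by
        have := hqmin'; rw [minimalPrimes_eq_minimals] at this; exact this.1
    -- q < Q since s ∈ Q \ q
      have hsq : s ∉ q := fun hs => hsnot (Set.mem_biUnion (by
        simpa [hF] using hqmin') hs)
      have hqQ' : q < Q := lt_of_le_of_ne hqQ (by
        rintro rfl
        exact hsq (hsQ (Ideal.subset_span rfl)))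
      have hQm : Q = maximalIdeal R := by
        by_contra hQm
        exact aux_no_chain hdim hq hQ (maximalIdeal.isMaximal R).isPrime hqQ'
          (lt_of_le_of_ne (le_maximalIdeal hQ.ne_top) hQm)
      rw [hQm]
    obtain ⟨c, hc⟩ := Ideal.exists_pow_le_of_le_radical_of_fg hrad
      (IsNoetherian.noetherian _)
    exact ⟨c, hc⟩



lemma aux_t {p : Ideal R} (hp : p.IsPrime) (hmin : p ∈ minimalPrimes R) :
    ∃ t, t ∉ p ∧ ∃ k, ∀ a ∈ p ^ k, t * a = 0 := by
  classical
  haveI := hp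
  set Rp := Localization.AtPrime p with hRp
  haveI : IsNoetherianRing Rp :=
    IsLocalization.isNoetherianRing p.primeCompl Rp inferInstance
  obtain ⟨k, hk⟩ := IsNoetherianRing.isNilpotent_nilradical Rp
  have hmax : maximalIdeal Rp ≤ nilradical Rp := fun x hx =>
    haveI : Ring.KrullDimLE 0 Rp := Ring.KrullDimLE.of_isLocalization p hmin Rp
    Ring.KrullDimLE.isNilpotent_iff_mem_maximalIdeal.mpr hx
  have hker : ∀ a ∈ p ^ k, algebraMap R Rp a = 0 := by
    intro a ha
    have h1 : algebraMap R Rp a ∈ (Ideal.map (algebraMap R Rp) p) ^ k := by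
      rw [← Ideal.map_pow]; exact Ideal.mem_map_of_mem _ ha
    have h2 : (Ideal.map (algebraMap R Rp) p) ^ k ≤ nilradical Rp ^ k :=
      Ideal.pow_right_mono
        (le_trans (le_of_eq (Localization.AtPrime.map_eq_maximalIdeal)) hmax) k
    have h3 : nilradical Rp ^ k = ⊥ := by
      rw [← Ideal.zero_eq_bot, ← hk]
    have := h2 h1
    rw [h3, Ideal.mem_bot] at this
    exact this
  -- choose a common annihilating element for a finite generating set
  obtain ⟨S, hS⟩ : (p ^ k).FG := IsNoetherian.noetherian _
  set uu : R → R := fun a =>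
    if h : algebraMap R Rp a = 0 then
      ((IsLocalization.map_eq_zero_iff p.primeCompl Rp a).mp h).choose
    else 1 with huu
  have huu_mem : ∀ a : R, uu a ∈ p.primeCompl := by
    intro a
    rw [huu]
    by_cases h : algebraMap R Rp a = 0
    · simp only [h, dif_pos]
      exact ((IsLocalization.map_eq_zero_iff p.primeCompl Rp a).mp h).choose.2
    · simp only [h, dif_neg, not_false_iff]
      exact p.primeCompl.one_mem
  have huu_ann : ∀ a : R, algebraMap R Rp a = 0 → uu a * a = 0 := by
    intro a h
    rw [huu]
    simp only [h, dif_pos]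
    exact ((IsLocalization.map_eq_zero_iff p.primeCompl Rp a).mp h).choose_spec
  set t : R := ∏ a ∈ S, uu a with ht
  refine ⟨t, ?_, k, ?_⟩
  · exact fun htp => (Submonoid.prod_mem p.primeCompl (fun a _ => huu_mem a)) htp
  · intro a ha
    have hle : (p ^ k : Ideal R) ≤ LinearMap.ker (LinearMap.lsmul R R t) := by
      rw [← hS, Ideal.span_le]
      intro b hb
      have hbS : b ∈ S := hb
      have hb0 : algebraMap R Rp b = 0 := hker b (by rw [← hS]; exact Ideal.subset_span hb)
      rw [SetLike.mem_coe, LinearMap.mem_ker, LinearMap.lsmul_apply, smul_eq_mul]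
      have : t = (∏ a ∈ S.erase b, uu a) * uu b := (Finset.prod_erase_mul S uu hbS).symm
      rw [this, mul_assoc, huu_ann b hb0, mul_zero]
    have := hle ha
    rwa [LinearMap.mem_ker, LinearMap.lsmul_apply, smul_eq_mul] at this



variable {M : Type v} [AddCommGroup M] [Module R M]

lemma helper_span_smul {s : R} {N : Submodule R M} {x : M}
    (h : x ∈ Ideal.span {s} • N) : ∃ v ∈ N, s • v = x := by
  refine Submodule.smul_induction_on h ?_ ?_
  · intro r hr n hn
    rw [Ideal.mem_span_singleton] at hr
    obtain ⟨c, rfl⟩ := hr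
    exact ⟨c • n, N.smul_mem c hn, by rw [smul_smul]⟩
  · rintro x y ⟨v, hv, rfl⟩ ⟨w, hw, rfl⟩
    exact ⟨v + w, add_mem hv hw, by rw [smul_add]⟩

lemma aux_socle : ∀ (c : ℕ) (w : M), w ≠ 0 → (∀ a ∈ (maximalIdeal R)^c, a • w = 0) →
    ∃ y : M, y ≠ 0 ∧ ∀ a ∈ maximalIdeal R, a • y = 0 := by
  intro c
  induction c with
  | zero =>
    intro w hw h
    exact absurd (by simpa using h 1 (by simp)) hw
  | succ c ih =>
    intro w hw h
    by_cases hall : ∀ a ∈ maximalIdeal R, a • w = 0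
    · exact ⟨w, hw, hall⟩
    · push_neg at hall
      obtain ⟨a, ham, haw⟩ := hall
      refine ih (a • w) haw ?_
      intro b hb
      rw [smul_smul]
      exact h _ (by rw [pow_succ]; exact Ideal.mul_mem_mul hb ham)

lemma step2a (hdim : ringKrullDim R ≤ 1) {xh : AdicCompletion (maximalIdeal R) M}
    (hx : (Submodule.span R {xh}).annihilator = maximalIdeal R) :
    ∃ U : Submodule R M, U.annihilator = maximalIdeal R := by
  obtain ⟨s, hsm, c, hc⟩ := aux_s hdim
  have hs0 : s • xh = 0 :=
    (Submodule.mem_annihilator_span_singleton _ _).mp (by rw [hx]; exact hsm)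
  choose rep hrep using fun n =>
    Submodule.Quotient.mk_surjective ((maximalIdeal R) ^ n • ⊤ : Submodule R M) (xh.val n)
  set W := Submodule.torsionBy R M s with hW
  have key : ∀ n, rep (n + c) ∈ W ⊔ ((maximalIdeal R) ^ n • ⊤ : Submodule R M) := by
    intro n
    have h1 : s • rep (n + c) ∈ ((maximalIdeal R) ^ (n + c) • ⊤ : Submodule R M) := by
      rw [← Submodule.Quotient.mk_eq_zero, Submodule.Quotient.mk_smul, hrep,
        ← AdicCompletion.val_smul_apply, hs0, AdicCompletion.val_zero_apply]
    have h2 : ((maximalIdeal R) ^ (n + c) • ⊤ : Submodule R M) ≤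
        Ideal.span {s} • ((maximalIdeal R) ^ n • ⊤ : Submodule R M) := by
      have hmul : (maximalIdeal R) ^ (n + c) ≤ Ideal.span {s} * (maximalIdeal R) ^ n := by
        rw [pow_add, mul_comm]
        exact Ideal.mul_mono_left hc
      calc ((maximalIdeal R) ^ (n + c) • ⊤ : Submodule R M)
          ≤ (Ideal.span {s} * (maximalIdeal R) ^ n) • ⊤ := Submodule.smul_mono_left hmul
        _ = Ideal.span {s} • ((maximalIdeal R) ^ n • ⊤ : Submodule R M) := by
            rw [mul_smul]
    obtain ⟨v, hv, hsv⟩ := helper_span_smul (h2 h1)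
    have hmemW : rep (n + c) - v ∈ W := by
      rw [hW, Submodule.mem_torsionBy_iff, smul_sub, hsv, sub_self]
    have : rep (n + c) = (rep (n + c) - v) + v := by abel
    rw [this]
    exact Submodule.add_mem_sup hmemW hv
  by_cases hWbot : W = ⊥
  · exfalso
    have hzero : xh = 0 := by
      apply AdicCompletion.ext
      intro n
      have h1 : rep (n + c) ∈ ((maximalIdeal R) ^ n • ⊤ : Submodule R M) := by
        have := key n
        rwa [hWbot, bot_sup_eq] at this
      have h2 : xh.val n = AdicCompletion.transitionMap (maximalIdeal R) M
          (Nat.le_add_right n c) (xh.val (n + c)) :=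
        (AdicCompletion.transitionMap_comp_eval_apply (maximalIdeal R) M (Nat.le_add_right n c) xh).symm
      rw [h2, ← hrep, AdicCompletion.val_zero_apply]
      change Submodule.Quotient.mk (p := ((maximalIdeal R) ^ n • ⊤ : Submodule R M)) (rep (n + c)) = 0
      rw [Submodule.Quotient.mk_eq_zero]
      exact h1
    rw [hzero, Submodule.span_singleton_eq_bot.mpr rfl, Submodule.annihilator_bot] at hx
    exact (maximalIdeal.isMaximal R).ne_top hx.symm
  · obtain ⟨w, hwW, hw0⟩ := Submodule.exists_mem_ne_zero_of_ne_bot hWbot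
    have hwann : ∀ a ∈ (maximalIdeal R) ^ c, a • w = 0 := by
      intro a ha
      obtain ⟨r, hr⟩ := Ideal.mem_span_singleton.mp (hc ha)
      have hsw : s • w = 0 := (Submodule.mem_torsionBy_iff _ _).mp hwW
      rw [hr, mul_smul, smul_comm, hsw, smul_zero]
    obtain ⟨y, hy0, hy⟩ := aux_socle c w hw0 hwann
    refine ⟨Submodule.span R {y}, le_antisymm ?_ ?_⟩
    · apply le_maximalIdeal
      rw [Ne, Submodule.annihilator_eq_top_iff, Submodule.span_singleton_eq_bot]
      exact hy0
    · intro a ha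
      exact (Submodule.mem_annihilator_span_singleton _ _).mpr (hy a ha)


lemma step2b (hdim : ringKrullDim R ≤ 1) {p : Ideal R} (hp : p.IsPrime)
    (hpm : p ≠ maximalIdeal R) {xh : AdicCompletion (maximalIdeal R) M}
    (hx : (Submodule.span R {xh}).annihilator = p) :
    ∃ U : Submodule R M, U.annihilator = p := by
  obtain ⟨t, htp, k0, htk0⟩ := aux_t hp (aux_minimal hdim hp hpm)
  set k := k0 + 1 with hk
  have htk : ∀ a ∈ p ^ k, t * a = 0 := fun a ha =>
    htk0 a (Ideal.pow_le_pow_right (Nat.le_succ k0) ha)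
  set U := Submodule.torsionBySet R M (p : Set R) with hU
  refine ⟨U, le_antisymm ?_ ?_⟩
  · intro r hr
    have hrU : ∀ x ∈ U, r • x = 0 := Submodule.mem_annihilator.mp hr
    have hKi : ∀ i, ∀ x : M, (∀ a ∈ p ^ (i + 1), a • x = 0) → r ^ (i + 1) • x = 0 := by
      intro i
      induction i with
      | zero =>
        intro x hx1
        rw [pow_one]
        refine hrU x ?_
        rw [hU]
        refine (Submodule.mem_torsionBySet_iff _ _).mpr ?_
        rintro ⟨a, ha⟩
        exact hx1 a (by simpa using ha)
      | succ i ih =>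
        intro x hxK
        have h1 : ∀ a ∈ p, r ^ (i + 1) • (a • x) = 0 := by
          intro a hap
          refine ih (a • x) ?_
          intro b hb
          rw [smul_smul]
          refine hxK (b * a) ?_
          rw [pow_succ]
          exact Ideal.mul_mem_mul hb hap
        have h2 : r ^ (i + 1) • x ∈ U := by
          rw [hU]
          refine (Submodule.mem_torsionBySet_iff _ _).mpr ?_
          rintro ⟨a, ha⟩
          rw [smul_comm]
          exact h1 a ha
        have h3 := hrU _ h2
        rw [smul_smul, ← pow_succ'] at h3
        exact h3
    have hann : ∀ x : M, (r ^ k * t) • x = 0 := by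
      intro x
      have htx : ∀ a ∈ p ^ k, a • (t • x) = 0 := by
        intro a ha
        rw [smul_smul]
        have h0 : a * t = 0 := by rw [mul_comm]; exact htk a ha
        rw [h0, zero_smul]
      have := hKi k0 (t • x) (by rwa [← hk])
      rw [mul_smul]
      rw [← hk] at this
      exact this
    have hxh0 : (r ^ k * t) • xh = 0 := by
      apply AdicCompletion.ext
      intro n
      rw [AdicCompletion.val_smul_apply, AdicCompletion.val_zero_apply]
      obtain ⟨xn, hxn⟩ := Submodule.Quotient.mk_surjective
        ((maximalIdeal R) ^ n • ⊤ : Submodule R M) (xh.val n)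
      rw [← hxn, ← Submodule.Quotient.mk_smul, hann, Submodule.Quotient.mk_zero]
    have hmem : r ^ k * t ∈ p := by
      rw [← hx]
      exact (Submodule.mem_annihilator_span_singleton _ _).mpr hxh0
    rcases hp.mem_or_mem hmem with h | h
    · exact hp.mem_of_pow_mem _ h
    · exact absurd h htp
  · intro a ha
    rw [Submodule.mem_annihilator]
    intro x hxU
    exact (Submodule.mem_torsionBySet_iff _ _).mp hxU ⟨a, ha⟩

lemma step1a [IsHausdorff (maximalIdeal R) M] {U : Submodule R M}
    (hU : U.annihilator = maximalIdeal R) :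
    IsAssociatedPrime (maximalIdeal R) (AdicCompletion (maximalIdeal R) M) := by
  have hUne : U ≠ ⊥ := by
    intro h
    rw [h, Submodule.annihilator_bot] at hU
    exact (maximalIdeal.isMaximal R).ne_top hU.symm
  obtain ⟨u, huU, hu0⟩ := Submodule.exists_mem_ne_zero_of_ne_bot hUne
  set xh := AdicCompletion.of (maximalIdeal R) M u with hxh
  have hxh0 : xh ≠ 0 := by
    intro h
    apply hu0
    apply IsHausdorff.haus (inferInstance : IsHausdorff (maximalIdeal R) M) u
    intro n
    rw [SModEq.zero]
    have h1 := AdicCompletion.eval_of (maximalIdeal R) M n u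
    rw [← hxh, h, map_zero] at h1
    rw [← Submodule.Quotient.mk_eq_zero, ← Submodule.mkQ_apply]
    exact h1.symm
  refine isAssociatedPrime_iff.mpr ⟨(maximalIdeal.isMaximal R).isPrime, xh, ?_⟩
  rw [Submodule.bot_colon']
  apply le_antisymm
  · intro a ha
    refine (Submodule.mem_annihilator_span_singleton _ _).mpr ?_
    have hau : a • u = 0 := by
      have haU : a ∈ U.annihilator := by rw [hU]; exact ha
      exact Submodule.mem_annihilator.mp haU u huU
    rw [hxh, ← map_smul, hau, map_zero]
  · apply le_maximalIdeal
    rw [Ne, Submodule.annihilator_eq_top_iff, Submodule.span_singleton_eq_bot]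
    exact hxh0

lemma step1b [IsHausdorff (maximalIdeal R) M] (hdim : ringKrullDim R ≤ 1)
    {p : Ideal R} (hp : p.IsPrime) (hpm : p ≠ maximalIdeal R)
    {U : Submodule R M} (hU : U.annihilator = p) :
    IsAssociatedPrime p (AdicCompletion (maximalIdeal R) M) := by
  classical
  obtain ⟨s, hsm, hsp⟩ := SetLike.exists_of_lt
    (lt_of_le_of_ne (le_maximalIdeal hp.ne_top) hpm)
  -- powers of s do not kill U
  have hspow : ∀ j : ℕ, ∃ u, u ∈ U ∧ s ^ j • u ≠ 0 := by
    intro j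
    by_contra h
    push_neg at h
    have hmem : s ^ j ∈ U.annihilator := Submodule.mem_annihilator.mpr h
    rw [hU] at hmem
    exact hsp (hp.mem_of_pow_mem _ hmem)
  -- separatedness gives arbitrarily deep avoidance
  have hNext : ∀ (y : M), y ≠ 0 → ∀ N0 : ℕ, ∃ N, N0 < N ∧
      y ∉ ((maximalIdeal R) ^ N • ⊤ : Submodule R M) := by
    intro y hy N0
    by_contra h
    push_neg at h
    apply hy
    apply IsHausdorff.haus (inferInstance : IsHausdorff (maximalIdeal R) M) y
    intro n
    rw [SModEq.zero]
    have hmem := h (N0 + n + 1) (by omega)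
    exact Submodule.smul_mono_left (Ideal.pow_le_pow_right (by omega)) hmem
  -- the invariant carried through the recursion
  set Pinv : ℕ → ((ℕ × M) × (ℕ × M)) → Prop := fun i q =>
    q.2.2 ∈ U ∧ i + 1 ≤ q.2.1 ∧
    (1 ≤ i → s ^ i • q.2.2 ∉ ((maximalIdeal R) ^ q.2.1 • ⊤ : Submodule R M)) ∧
    (1 ≤ i → q.1.1 < q.2.1 ∧
      q.2.2 - q.1.2 ∈ ((maximalIdeal R) ^ q.1.1 • ⊤ : Submodule R M)) with hPinv
  -- one step of the construction
  let F : ∀ i, {q : (ℕ × M) × (ℕ × M) // Pinv i q} →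
      {q : (ℕ × M) × (ℕ × M) // Pinv (i+1) q} := fun i pr =>
    have huU : (hspow (i + 1 + pr.val.2.1)).choose ∈ U :=
      (hspow (i + 1 + pr.val.2.1)).choose_spec.1
    have hu0 : s ^ (i + 1 + pr.val.2.1) • (hspow (i + 1 + pr.val.2.1)).choose ≠ 0 :=
      (hspow (i + 1 + pr.val.2.1)).choose_spec.2
    have hy'U : (if s ^ (i+1) • pr.val.2.2 = 0 then
        pr.val.2.2 + s ^ pr.val.2.1 • (hspow (i + 1 + pr.val.2.1)).choose
        else pr.val.2.2) ∈ U := by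
      split_ifs with h0
      · exact U.add_mem pr.property.1 (U.smul_mem _ huU)
      · exact pr.property.1
    have hy'0 : s ^ (i+1) • (if s ^ (i+1) • pr.val.2.2 = 0 then
        pr.val.2.2 + s ^ pr.val.2.1 • (hspow (i + 1 + pr.val.2.1)).choose
        else pr.val.2.2) ≠ 0 := by
      split_ifs with h0
      · rw [smul_add, h0, zero_add, smul_smul, ← pow_add]
        exact hu0
      · exact h0
    have hex : ∃ N, pr.val.2.1 < N ∧ s ^ (i+1) • (if s ^ (i+1) • pr.val.2.2 = 0 then
        pr.val.2.2 + s ^ pr.val.2.1 • (hspow (i + 1 + pr.val.2.1)).choose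
        else pr.val.2.2) ∉ ((maximalIdeal R) ^ N • ⊤ : Submodule R M) :=
      hNext _ hy'0 pr.val.2.1
    ⟨(pr.val.2, (hex.choose, if s ^ (i+1) • pr.val.2.2 = 0 then
        pr.val.2.2 + s ^ pr.val.2.1 • (hspow (i + 1 + pr.val.2.1)).choose
        else pr.val.2.2)), by
      refine ⟨hy'U, ?_, fun _ => hex.choose_spec.2, fun _ => ⟨hex.choose_spec.1, ?_⟩⟩
      · show i + 1 + 1 ≤ hex.choose
        have h1 : i + 1 ≤ pr.val.2.1 := pr.property.2.1
        have h2 : pr.val.2.1 < hex.choose := hex.choose_spec.1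
        omega
      · show (if s ^ (i+1) • pr.val.2.2 = 0 then
            pr.val.2.2 + s ^ pr.val.2.1 • (hspow (i + 1 + pr.val.2.1)).choose
            else pr.val.2.2) - pr.val.2.2 ∈
          ((maximalIdeal R) ^ pr.val.2.1 • ⊤ : Submodule R M)
        split_ifs with h0
        · rw [add_sub_cancel_left]
          exact Submodule.smul_mem_smul (Ideal.pow_mem_pow hsm _) Submodule.mem_top
        · rw [sub_self]
          exact Submodule.zero_mem _⟩
  -- base point
  let base : {q : (ℕ × M) × (ℕ × M) // Pinv 0 q} :=
    ⟨((1, 0), (1, 0)), U.zero_mem, Nat.le.refl,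
      fun h => absurd h (by omega), fun h => absurd h (by omega)⟩
  let H : ∀ i : ℕ, {q : (ℕ × M) × (ℕ × M) // Pinv i q} :=
    fun i => Nat.rec base (fun i prev => F i prev) i
  let g : ℕ → ℕ × M := fun i => (H i).val.2
  have hlink : ∀ i, (H (i+1)).val.1 = g i := fun i => rfl
  have hA : ∀ i, (g i).2 ∈ U := fun i => (H i).property.1
  have hB : ∀ i, i + 1 ≤ (g i).1 := fun i => (H i).property.2.1
  have hC : ∀ i, 1 ≤ i → s ^ i • (g i).2 ∉
      ((maximalIdeal R) ^ (g i).1 • ⊤ : Submodule R M) := fun i hi => (H i).property.2.2.1 hi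
  have hD : ∀ i, (g i).1 < (g (i+1)).1 := by
    intro i
    have := ((H (i+1)).property.2.2.2 (by omega)).1
    rwa [hlink i] at this
  have hE : ∀ i, (g (i+1)).2 - (g i).2 ∈
      ((maximalIdeal R) ^ (g i).1 • ⊤ : Submodule R M) := by
    intro i
    have := ((H (i+1)).property.2.2.2 (by omega)).2
    rwa [hlink i] at this
  have hNmono : ∀ i j, i ≤ j → (g i).1 ≤ (g j).1 := by
    intro i j hij
    induction j with
    | zero =>
      have h0 : i = 0 := by omega
      rw [h0]
    | succ j ih =>
      rcases Nat.lt_or_ge i (j+1) with h | h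
      · exact le_trans (ih (by omega)) (le_of_lt (hD j))
      · have : i = j + 1 := by omega
        rw [this]
  have htail : ∀ i j, i ≤ j → (g j).2 - (g i).2 ∈
      ((maximalIdeal R) ^ (g i).1 • ⊤ : Submodule R M) := by
    intro i j hij
    induction j with
    | zero =>
      have : i = 0 := by omega
      rw [this, sub_self]
      exact Submodule.zero_mem _
    | succ j ih =>
      rcases Nat.lt_or_ge i (j+1) with h | h
      · have h1 := ih (by omega)
        have h2 : (g (j+1)).2 - (g j).2 ∈
            ((maximalIdeal R) ^ (g i).1 • ⊤ : Submodule R M) :=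
          Submodule.smul_mono_left (Ideal.pow_le_pow_right (hNmono i j (by omega))) (hE j)
        have := Submodule.add_mem _ h1 h2
        rwa [sub_add_sub_cancel'] at this
      · have : i = j + 1 := by omega
        rw [this, sub_self]
        exact Submodule.zero_mem _
  -- build the element of the completion
  set f : ℕ → M := fun n => (g n).2 with hf
  have hfc : ∀ n, f n ≡ f (n + 1) [SMOD ((maximalIdeal R) ^ n • ⊤ : Submodule R M)] := by
    intro n
    rw [SModEq.sub_mem]
    have : f n - f (n+1) = -(f (n+1) - f n) := by abel
    rw [this]
    refine Submodule.neg_mem _ ?_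
    exact Submodule.smul_mono_left (Ideal.pow_le_pow_right (by have := hB n; omega)) (hE n)
  set seq := AdicCompletion.AdicCauchySequence.mk (maximalIdeal R) M f hfc with hseq
  set xh := AdicCompletion.mk (maximalIdeal R) M seq with hxh
  have hval : ∀ n, xh.val n = Submodule.mkQ _ (f n) := by
    intro n
    rw [hxh, AdicCompletion.mk_apply_coe]
    rfl
  have hpkill : ∀ a ∈ p, a • xh = 0 := by
    intro a ha
    apply AdicCompletion.ext
    intro n
    rw [AdicCompletion.val_smul_apply, AdicCompletion.val_zero_apply, hval n, ← map_smul]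
    have : a • f n = 0 := by
      have haU : a ∈ U.annihilator := by rw [hU]; exact ha
      exact Submodule.mem_annihilator.mp haU _ (hA n)
    rw [this, map_zero]
  have hskill : ∀ i, 1 ≤ i → s ^ i • xh ≠ 0 := by
    intro i hi h0
    have h1 : (s ^ i • xh).val ((g i).1) = 0 := by rw [h0, AdicCompletion.val_zero_apply]
    rw [AdicCompletion.val_smul_apply, hval, ← map_smul] at h1
    have h2 : s ^ i • f ((g i).1) ∈
        ((maximalIdeal R) ^ (g i).1 • ⊤ : Submodule R M) := by
      rwa [Submodule.mkQ_apply, Submodule.Quotient.mk_eq_zero] at h1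
    have h3 : s ^ i • f ((g i).1) - s ^ i • f i ∈
        ((maximalIdeal R) ^ (g i).1 • ⊤ : Submodule R M) := by
      rw [← smul_sub]
      exact Submodule.smul_mem _ _ (htail i ((g i).1) (by have := hB i; omega))
    have h4 : s ^ i • f i ∈ ((maximalIdeal R) ^ (g i).1 • ⊤ : Submodule R M) := by
      have := Submodule.sub_mem _ h2 h3
      rwa [sub_sub_cancel] at this
    exact hC i hi h4
  refine isAssociatedPrime_iff.mpr ⟨hp, xh, ?_⟩
  rw [Submodule.bot_colon']
  apply le_antisymm
  · intro a ha
    exact (Submodule.mem_annihilator_span_singleton _ _).mpr (hpkill a ha)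
  · intro r hr
    by_contra hrp
    have hrkill : r • xh = 0 := (Submodule.mem_annihilator_span_singleton _ _).mp hr
    set J := p ⊔ Ideal.span {r} with hJ
    have hJkill : ∀ z ∈ J, z • xh = 0 := by
      intro z hz
      rw [hJ, Submodule.mem_sup] at hz
      obtain ⟨a, ha, b, hb, rfl⟩ := hz
      obtain ⟨c, rfl⟩ := Ideal.mem_span_singleton'.mp hb
      rw [add_smul, hpkill a ha, zero_add, mul_smul, hrkill, smul_zero]
    have hJne : J ≠ ⊤ := by
      intro h
      have h1 : (1:R) ∈ J := by rw [h]; exact Submodule.mem_top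
      have h2 := hJkill 1 h1
      rw [one_smul] at h2
      refine hskill 1 (le_refl 1) ?_
      rw [h2, smul_zero]
    have hpJ : p < J := by
      refine lt_of_le_of_ne le_sup_left ?_
      intro h
      refine hrp ?_
      rw [h, hJ]
      exact Ideal.mem_sup_right (Ideal.subset_span rfl)
    obtain ⟨c, hcJ, hc1⟩ := aux_pow_le hdim hp hJne hpJ
    have hsc : s ^ c ∈ J := hcJ (Ideal.pow_mem_pow hsm c)
    exact hskill c hc1 (hJkill _ hsc)

end Aux

theorem ass_completion_eq_koatt_of_dim_le_one
    (R : Type u) [CommRing R] [IsNoetherianRing R] [IsLocalRing R]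
    (hdim : ringKrullDim R ≤ 1)
    (M : Type v) [AddCommGroup M] [Module R M]
    [IsHausdorff (maximalIdeal R) M] :
    associatedPrimes R (AdicCompletion (maximalIdeal R) M) = Koatt R M := by
  ext q
  simp only [Koatt, Set.mem_setOf_eq]
  constructor
  · intro hA
    obtain ⟨hq, xh, hx⟩ := isAssociatedPrime_iff.mp hA
    rw [Submodule.bot_colon'] at hx
    refine ⟨hq, ?_⟩
    by_cases hqm : q = maximalIdeal R
    · subst hqm
      exact step2a hdim hx.symm
    · exact step2b hdim hq hqm hx.symm
  · rintro ⟨hq, U, hU⟩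
    by_cases hqm : q = maximalIdeal R
    · subst hqm
      exact step1a hU
    · exact step1b hdim hq hqm hU
end

section
/- Let (R, m) be a commutative Noetherian local ring and M a separated R-module such that the m-adic completion M̂ is a flat R-module. The following are equivalent: (i) M is totally separated; (ii) for every prime ideal p of R, the module M/pM is separated; (iii) M is pure in M̂. -/
open IsLocalRing TensorProduct

universe u v w x

universe y

/-- `M` is totally separated if `X ⊗ M` is (m-adically) separated for every
finitely generated `R`-module `X`. -/
def TotallySeparated (R : Type u) [CommRing R] [IsLocalRing R]
    (M : Type v) [AddCommGroup M] [Module R M] : Prop :=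
  ∀ (X : Type u) [AddCommGroup X] [Module R X], Module.Finite R X →
    IsHausdorff (maximalIdeal R) (TensorProduct R X M)

namespace TotSepAux

open Submodule LinearMap

variable {R : Type u} [CommRing R] (I : Ideal R)

theorem mem_smul_top_of_map {A : Type v} {B : Type w} [AddCommGroup A] [Module R A]
    [AddCommGroup B] [Module R B] (f : A →ₗ[R] B) (J : Ideal R) {x : A}
    (hx : x ∈ (J • ⊤ : Submodule R A)) : f x ∈ (J • ⊤ : Submodule R B) := by
  have : Submodule.map f (J • ⊤ : Submodule R A) ≤ (J • ⊤ : Submodule R B) := by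
    rw [Submodule.map_smul'']
    exact Submodule.smul_mono le_rfl le_top
  exact this ⟨x, hx, rfl⟩

theorem isHausdorff_of_injective {A : Type v} {B : Type w} [AddCommGroup A] [Module R A]
    [AddCommGroup B] [Module R B] (f : A →ₗ[R] B) (hf : Function.Injective f)
    (h : IsHausdorff I B) : IsHausdorff I A := by
  constructor
  intro x hx
  apply hf
  rw [map_zero]
  apply h.haus
  intro n
  rw [SModEq.zero]
  exact mem_smul_top_of_map f (I ^ n) (SModEq.zero.mp (hx n))

theorem isHausdorff_of_linearEquiv {A : Type v} {B : Type w} [AddCommGroup A] [Module R A]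
    [AddCommGroup B] [Module R B] (e : A ≃ₗ[R] B) (h : IsHausdorff I A) : IsHausdorff I B :=
  isHausdorff_of_injective I (e.symm : B →ₗ[R] A) e.symm.injective h

theorem isPrecomplete_of_linearEquiv {A : Type v} {B : Type w} [AddCommGroup A] [Module R A]
    [AddCommGroup B] [Module R B] (e : A ≃ₗ[R] B) (h : IsPrecomplete I A) : IsPrecomplete I B := by
  constructor
  intro f hf
  obtain ⟨L, hL⟩ := h.prec (f := fun n => e.symm (f n)) (by
    intro m n hmn
    rw [SModEq.sub_mem, ← map_sub]
    exact mem_smul_top_of_map (e.symm : B →ₗ[R] A) (I ^ m) (SModEq.sub_mem.mp (hf hmn)))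
  refine ⟨e L, fun n => ?_⟩
  have := SModEq.sub_mem.mp (hL n)
  rw [SModEq.sub_mem]
  have h2 := mem_smul_top_of_map (e : A →ₗ[R] B) (I ^ n) this
  simpa using h2

variable (M : Type v) [AddCommGroup M] [Module R M]

/-- The key lemma: elements of the adic completion vanishing in the `n`-th level
belong to `I ^ n` times the completion (needs `I ^ n` finitely generated). -/
theorem ker_eval_le_smul_top [IsNoetherianRing R] (n : ℕ) {z : AdicCompletion I M}
    (hz : AdicCompletion.eval I M n z = 0) :
    z ∈ (I ^ n • ⊤ : Submodule R (AdicCompletion I M)) := by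
  obtain ⟨f, rfl⟩ := AdicCompletion.mk_surjective I M z
  -- generators of I ^ n
  obtain ⟨N, g, hg⟩ := Submodule.fg_iff_exists_fin_generating_family.mp
    (IsNoetherian.noetherian (I ^ n : Ideal R))
  have hgmem : ∀ j, g j ∈ I ^ n := fun j => by
    rw [← hg]; exact Submodule.subset_span (Set.mem_range_self j)
  -- the map φ : M^N → M, u ↦ ∑ g j • u j
  set φ : (Fin N → M) →ₗ[R] M := ∑ j : Fin N, (g j) • (LinearMap.proj j) with hφ
  have hφ_apply : ∀ u : Fin N → M, φ u = ∑ j : Fin N, g j • u j := by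
    intro u
    simp [hφ, LinearMap.sum_apply]
  have hrange : LinearMap.range φ = (I ^ n • ⊤ : Submodule R M) := by
    apply le_antisymm
    · rintro _ ⟨u, rfl⟩
      rw [hφ_apply]
      exact Submodule.sum_mem _ fun j _ =>
        Submodule.smul_mem_smul (hgmem j) Submodule.mem_top
    · intro x hx
      refine Submodule.smul_induction_on hx ?_ ?_
      · intro r hr m _
        rw [← hg] at hr
        induction hr using Submodule.span_induction with
        | mem a ha =>
          obtain ⟨j, rfl⟩ := ha
          refine ⟨Pi.single j m, ?_⟩
          rw [hφ_apply]
          rw [Finset.sum_eq_single j (fun i _ hij => by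
            simp [Pi.single_eq_of_ne hij]) (by simp)]
          simp
        | zero => rw [zero_smul]; exact Submodule.zero_mem _
        | add a b _ _ ha hb => rw [add_smul]; exact Submodule.add_mem _ ha hb
        | smul c a _ ha =>
          rw [smul_eq_mul, mul_smul]
          exact Submodule.smul_mem _ c ha
      · intro a b ha hb
        exact Submodule.add_mem _ ha hb
  -- f (m + n) ∈ I ^ n • ⊤
  have hfn : f.val n ∈ (I ^ n • ⊤ : Submodule R M) := by
    have : AdicCompletion.eval I M n (AdicCompletion.mk I M f) =
        Submodule.mkQ (I ^ n • ⊤ : Submodule R M) (f.val n) := rfl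
    rw [this] at hz
    simpa [Submodule.Quotient.mk_eq_zero] using hz
  set w : ℕ → M := fun m => f.val (m + n) with hw
  have hwmem : ∀ m, w m ∈ (I ^ n • ⊤ : Submodule R M) := by
    intro m
    have h1 : f.val n ≡ f.val (m + n) [SMOD (I ^ n • ⊤ : Submodule R M)] :=
      f.property (Nat.le_add_left n m)
    have := SModEq.sub_mem.mp h1
    have : w m - f.val n ∈ (I ^ n • ⊤ : Submodule R M) := by
      rw [show w m - f.val n = -(f.val n - f.val (m+n)) by rw [hw]; rw [neg_sub]]
      exact Submodule.neg_mem _ this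
    simpa using Submodule.add_mem _ this hfn
  have hwdiff : ∀ m, w (m + 1) - w m ∈ I ^ m • (I ^ n • ⊤ : Submodule R M) := by
    intro m
    have h1 : f.val (m + n) ≡ f.val (m + 1 + n) [SMOD (I ^ (m + n) • ⊤ : Submodule R M)] :=
      f.property (by omega)
    have h2 := Submodule.neg_mem _ (SModEq.sub_mem.mp h1)
    have h3 : w (m + 1) - w m ∈ (I ^ (m + n) • ⊤ : Submodule R M) := by
      simpa [hw] using h2
    have heq : (I ^ (m + n) • ⊤ : Submodule R M) = I ^ m • (I ^ n • ⊤ : Submodule R M) := by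
      rw [pow_add, ← Submodule.smul_assoc, smul_eq_mul]
    rwa [heq] at h3
  -- choose approximating sequences
  have hchoose : ∀ m, ∃ vm ∈ (I ^ m • ⊤ : Submodule R (Fin N → M)), φ vm = w (m + 1) - w m := by
    intro m
    have : w (m + 1) - w m ∈ Submodule.map φ (I ^ m • ⊤ : Submodule R (Fin N → M)) := by
      rw [Submodule.map_smul'', Submodule.map_top, hrange]
      exact hwdiff m
    obtain ⟨v, hv, hveq⟩ := this
    exact ⟨v, hv, hveq⟩
  choose v hvmem hveq using hchoose
  obtain ⟨u0, hu0⟩ : w 0 ∈ LinearMap.range φ := by rw [hrange]; exact hwmem 0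
  set U : ℕ → (Fin N → M) := fun m => u0 + ∑ k ∈ Finset.range m, v k with hU
  have hUφ : ∀ m, φ (U m) = w m := by
    intro m
    induction m with
    | zero => simpa [hU] using hu0
    | succ m ih =>
      have : U (m + 1) = U m + v m := by
        rw [hU]; simp only [Finset.sum_range_succ, add_assoc]
      rw [this, map_add, ih, hveq m]
      abel
  have hUdiff : ∀ m, U (m + 1) - U m ∈ (I ^ m • ⊤ : Submodule R (Fin N → M)) := by
    intro m
    have e1 : U (m + 1) = U m + v m := by
      rw [hU]; simp only [Finset.sum_range_succ, add_assoc]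
    rw [e1, add_sub_cancel_left]; exact hvmem m
  -- component Cauchy sequences
  have hcomp : ∀ (j : Fin N) (m : ℕ),
      (fun m => U m j) m ≡ (fun m => U m j) (m + 1) [SMOD (I ^ m • ⊤ : Submodule R M)] := by
    intro j m
    rw [SModEq.sub_mem]
    have := mem_smul_top_of_map (LinearMap.proj j (R := R) (φ := fun _ : Fin N => M))
      (I ^ m) (Submodule.neg_mem _ (hUdiff m))
    simpa using this
  set s : Fin N → AdicCompletion.AdicCauchySequence I M := fun j =>
    AdicCompletion.AdicCauchySequence.mk I M (fun m => U m j) (hcomp j) with hs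
  -- the final identity
  have hfinal : AdicCompletion.mk I M f = ∑ j : Fin N, g j • AdicCompletion.mk I M (s j) := by
    apply AdicCompletion.ext
    intro m
    rw [AdicCompletion.val_sum]
    have h1 : (AdicCompletion.mk I M f).val m = Submodule.mkQ _ (f.val m) := rfl
    have h2 : ∀ j : Fin N, ((g j • AdicCompletion.mk I M (s j)).val m) =
        g j • Submodule.mkQ (I ^ m • ⊤ : Submodule R M) (U m j) := by
      intro j
      rw [AdicCompletion.val_smul]
      rfl
    rw [h1]
    rw [Finset.sum_apply, Finset.sum_congr rfl (fun j _ => h2 j)]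
    have : ∑ j : Fin N, g j • Submodule.mkQ (I ^ m • ⊤ : Submodule R M) (U m j) =
        Submodule.mkQ (I ^ m • ⊤ : Submodule R M) (∑ j : Fin N, g j • U m j) := by
      simp [map_sum]
    rw [this, ← hφ_apply, hUφ m]
    -- mkQ (w m) = mkQ (f m)
    rw [Submodule.mkQ_apply, Submodule.mkQ_apply, Submodule.Quotient.eq]
    have h1 : f.val m ≡ f.val (m + n) [SMOD (I ^ m • ⊤ : Submodule R M)] :=
      f.property (Nat.le_add_right m n)
    simpa [hw] using SModEq.sub_mem.mp h1
  rw [hfinal]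
  exact Submodule.sum_mem _ fun j _ =>
    Submodule.smul_mem_smul (hgmem j) Submodule.mem_top


theorem smul_top_quotient_eq_bot (J : Ideal R) :
    (J • ⊤ : Submodule R (M ⧸ (J • ⊤ : Submodule R M))) = ⊥ := by
  rw [eq_bot_iff]
  intro x hx
  rw [Submodule.mem_bot]
  refine Submodule.smul_induction_on hx ?_ ?_
  · intro r hr q _
    obtain ⟨z, rfl⟩ := Submodule.mkQ_surjective _ q
    rw [Submodule.mkQ_apply, ← Submodule.Quotient.mk_smul, Submodule.Quotient.mk_eq_zero]
    exact Submodule.smul_mem_smul hr Submodule.mem_top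
  · intro a b ha hb; rw [ha, hb, add_zero]

theorem adicCompletion_isAdicComplete [IsNoetherianRing R] :
    IsAdicComplete I (AdicCompletion I M) := by
  have hpre : IsPrecomplete I (AdicCompletion I M) := by
    constructor
    intro f hf
    have coh : ∀ {m n : ℕ} (hmn : m ≤ n),
        AdicCompletion.transitionMap I M hmn ((f n).val n) = (f m).val m := by
      intro m n hmn
      have h1 : (f n).val m = (f m).val m := by
        have h2 := SModEq.sub_mem.mp (hf hmn)
        have h3 := mem_smul_top_of_map (AdicCompletion.eval I M m) (I ^ m) h2
        rw [map_sub, smul_top_quotient_eq_bot, Submodule.mem_bot, sub_eq_zero] at h3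
        exact h3.symm
      rw [← h1]
      exact (f n).property hmn
    refine ⟨⟨fun m => (f m).val m, coh⟩, fun k => ?_⟩
    refine SModEq.sub_mem.mpr ?_
    apply ker_eval_le_smul_top I M k
    refine (map_sub _ _ _).trans (sub_eq_zero.mpr ?_)
    rfl
  exact { toIsHausdorff := inferInstance, toIsPrecomplete := hpre }


section Tensor

variable {N : Type w} [AddCommGroup N] [Module R N]
variable (F : Type x) [AddCommGroup F] [Module R F]

theorem range_rTensor_le_smul (J : Ideal R) (K P : Submodule R N) (h : P ≤ J • K) :
    LinearMap.range (LinearMap.rTensor F P.subtype) ≤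
      J • LinearMap.range (LinearMap.rTensor F K.subtype) := by
  rintro _ ⟨t, rfl⟩
  induction t using TensorProduct.induction_on with
  | zero => rw [map_zero]; exact Submodule.zero_mem _
  | tmul p f =>
    rw [LinearMap.rTensor_tmul]
    refine Submodule.smul_induction_on
      (p := fun y => y ⊗ₜ[R] f ∈ J • LinearMap.range (LinearMap.rTensor F K.subtype))
      (h p.2) ?_ ?_
    · intro r hr k hk
      rw [← TensorProduct.smul_tmul']
      exact Submodule.smul_mem_smul hr ⟨(⟨k, hk⟩ : K) ⊗ₜ[R] f, rfl⟩
    · intro a b ha hb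
      rw [TensorProduct.add_tmul]
      exact Submodule.add_mem _ ha hb
  | add a b ha hb => rw [map_add]; exact Submodule.add_mem _ ha hb

theorem smul_top_le_range_rTensor (J : Ideal R) :
    (J • ⊤ : Submodule R (N ⊗[R] F)) ≤
      LinearMap.range (LinearMap.rTensor F ((J • ⊤ : Submodule R N).subtype)) := by
  have aux : ∀ r ∈ J, ∀ t : N ⊗[R] F,
      r • t ∈ LinearMap.range (LinearMap.rTensor F ((J • ⊤ : Submodule R N).subtype)) := by
    intro r hr t
    induction t using TensorProduct.induction_on with
    | zero => rw [smul_zero]; exact Submodule.zero_mem _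
    | tmul n f =>
      rw [TensorProduct.smul_tmul']
      exact ⟨(⟨r • n, Submodule.smul_mem_smul hr Submodule.mem_top⟩ :
        (J • ⊤ : Submodule R N)) ⊗ₜ[R] f, rfl⟩
    | add a b ha hb => rw [smul_add]; exact Submodule.add_mem _ ha hb
  intro z hz
  exact Submodule.smul_induction_on hz (fun r hr t _ => aux r hr t)
    (fun a b ha hb => Submodule.add_mem _ ha hb)

theorem range_rTensor_smul_top (J : Ideal R) :
    LinearMap.range (LinearMap.rTensor F ((J • ⊤ : Submodule R N).subtype)) =
      (J • ⊤ : Submodule R (N ⊗[R] F)) := by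
  apply le_antisymm
  · refine le_trans (range_rTensor_le_smul F J ⊤ (J • ⊤) le_rfl) ?_
    exact Submodule.smul_mono le_rfl le_top
  · exact smul_top_le_range_rTensor F J

theorem range_rTensor_mono {P Q : Submodule R N} (h : P ≤ Q) :
    LinearMap.range (LinearMap.rTensor F P.subtype) ≤
      LinearMap.range (LinearMap.rTensor F Q.subtype) := by
  rw [← Submodule.subtype_comp_inclusion P Q h, LinearMap.rTensor_comp]
  exact LinearMap.range_comp_le_range _ _

theorem range_rTensor_inf_le [Module.Flat R F] (A B : Submodule R N) :
    LinearMap.range (LinearMap.rTensor F A.subtype) ⊓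
      LinearMap.range (LinearMap.rTensor F B.subtype) ≤
    LinearMap.range (LinearMap.rTensor F (A ⊓ B).subtype) := by
  rintro z ⟨⟨a, rfl⟩, hzB⟩
  set φ : ↥A →ₗ[R] N ⧸ B := B.mkQ ∘ₗ A.subtype with hφ
  have hexactT := Module.Flat.rTensor_exact F (LinearMap.exact_subtype_ker_map φ)
  have hphi : LinearMap.rTensor F φ a = 0 := by
    obtain ⟨b, hb⟩ := hzB
    rw [hφ, LinearMap.rTensor_comp, LinearMap.comp_apply, ← hb,
      ← LinearMap.comp_apply, ← LinearMap.rTensor_comp]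
    have hz : B.mkQ ∘ₗ B.subtype = 0 :=
      LinearMap.ext fun x => (Submodule.Quotient.mk_eq_zero _).mpr x.2
    rw [hz]
    simp
  obtain ⟨t, ht⟩ := (hexactT a).mp hphi
  have hmem : ∀ c : ↥(LinearMap.ker φ), (A.subtype ∘ₗ (LinearMap.ker φ).subtype) c ∈ A ⊓ B := by
    intro c
    refine ⟨c.1.2, ?_⟩
    have h0 : B.mkQ (A.subtype c.1) = 0 := c.2
    rw [Submodule.mkQ_apply, Submodule.Quotient.mk_eq_zero] at h0
    exact h0
  set e : ↥(LinearMap.ker φ) →ₗ[R] ↥(A ⊓ B) :=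
    LinearMap.codRestrict (A ⊓ B) (A.subtype ∘ₗ (LinearMap.ker φ).subtype) hmem with he
  refine ⟨LinearMap.rTensor F e t, ?_⟩
  have hcomp : (A ⊓ B).subtype ∘ₗ e = A.subtype ∘ₗ (LinearMap.ker φ).subtype :=
    LinearMap.ext fun c => rfl
  rw [← LinearMap.comp_apply, ← LinearMap.rTensor_comp, hcomp, LinearMap.rTensor_comp,
    LinearMap.comp_apply, ht]

end Tensor

section Pi

variable (F : Type x) [AddCommGroup F] [Module R F]

theorem mem_smul_top_pi_iff (J : Ideal R) {s : ℕ} (x : Fin s → F) :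
    x ∈ (J • ⊤ : Submodule R (Fin s → F)) ↔ ∀ j, x j ∈ (J • ⊤ : Submodule R F) := by
  constructor
  · intro hx j
    exact mem_smul_top_of_map (LinearMap.proj j (R := R) (φ := fun _ : Fin s => F)) J hx
  · intro hx
    rw [← Finset.univ_sum_single x]
    refine Submodule.sum_mem _ fun j _ => ?_
    have : Pi.single j (x j) = LinearMap.single R (fun _ : Fin s => F) j (x j) := rfl
    rw [this]
    exact mem_smul_top_of_map _ J (hx j)

theorem isAdicComplete_pi [IsAdicComplete I F] (s : ℕ) :
    IsAdicComplete I (Fin s → F) := by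
  have hhaus : IsHausdorff I (Fin s → F) := by
    constructor
    intro x hx
    funext j
    refine IsHausdorff.haus (inferInstance : IsHausdorff I F) (x j) fun n => ?_
    rw [SModEq.zero]
    exact (mem_smul_top_pi_iff F (I ^ n) x).mp (SModEq.zero.mp (hx n)) j
  have hpre : IsPrecomplete I (Fin s → F) := by
    constructor
    intro f hf
    have hj : ∀ j : Fin s, ∃ L, ∀ n, f n j ≡ L [SMOD (I ^ n • ⊤ : Submodule R F)] := by
      intro j
      refine IsPrecomplete.prec (inferInstance : IsPrecomplete I F) (f := fun n => f n j) ?_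
      intro m n hmn
      rw [SModEq.sub_mem]
      exact (mem_smul_top_pi_iff F (I ^ m) _).mp (SModEq.sub_mem.mp (hf hmn)) j
    choose L hL using hj
    refine ⟨L, fun n => ?_⟩
    rw [SModEq.sub_mem]
    rw [mem_smul_top_pi_iff]
    intro j
    exact SModEq.sub_mem.mp (hL j n)
  exact { toIsHausdorff := hhaus, toIsPrecomplete := hpre }

/-- The canonical equivalence `(Fin s → R) ⊗ F ≃ (Fin s → F)`. -/
noncomputable def finTensorEquiv (s : ℕ) : ((Fin s → R) ⊗[R] F) ≃ₗ[R] (Fin s → F) :=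
  (TensorProduct.comm R (Fin s → R) F) ≪≫ₗ TensorProduct.piScalarRight R R F (Fin s)

theorem isAdicComplete_finTensor [IsAdicComplete I F] (s : ℕ) :
    IsAdicComplete I ((Fin s → R) ⊗[R] F) := by
  have e := (finTensorEquiv (R := R) F s).symm
  exact { toIsHausdorff := isHausdorff_of_linearEquiv I e (isAdicComplete_pi I F s).toIsHausdorff,
          toIsPrecomplete := isPrecomplete_of_linearEquiv I e
            (isAdicComplete_pi I F s).toIsPrecomplete }

end Pi

section Main

variable (F : Type x) [AddCommGroup F] [Module R F]

/-- Key theorem: if `F` is flat and adically complete over a Noetherian ring, then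
`X ⊗ F` is separated for every finitely generated `X`. -/
theorem isHausdorff_tensor_of_flat_of_complete [IsNoetherianRing R]
    [Module.Flat R F] [IsAdicComplete I F] (X : Type w) [AddCommGroup X] [Module R X]
    [Module.Finite R X] : IsHausdorff I (X ⊗[R] F) := by
  obtain ⟨r, π, hπ⟩ := Module.Finite.exists_fin' R X
  set K := LinearMap.ker π with hK
  have hKfin : Module.Finite R ↥K := Module.Finite.iff_fg.mpr (IsNoetherian.noetherian K)
  obtain ⟨s, q, hq⟩ := Module.Finite.exists_fin' R ↥K
  set ρ : (Fin s → R) →ₗ[R] (Fin r → R) := K.subtype ∘ₗ q with hρ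
  set πF := LinearMap.rTensor F π with hπF
  set ρF := LinearMap.rTensor F ρ with hρF
  set KF := LinearMap.range (LinearMap.rTensor F K.subtype) with hKF
  have hπF_surj : Function.Surjective πF := LinearMap.rTensor_surjective F hπ
  have hker : LinearMap.ker πF = KF := by
    have hex : Function.Exact (LinearMap.rTensor F (LinearMap.ker π).subtype)
        (LinearMap.rTensor F π) :=
      rTensor_exact F (LinearMap.exact_subtype_ker_map π) hπ
    rw [LinearMap.exact_iff] at hex
    exact hex
  have hrangeρ : LinearMap.range ρF = KF := by
    rw [hρF, hρ, LinearMap.rTensor_comp, LinearMap.range_comp,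
      LinearMap.range_eq_top.mpr (LinearMap.rTensor_surjective F hq), Submodule.map_top]
  obtain ⟨c, hc⟩ := Ideal.exists_pow_inf_eq_pow_smul I (M := Fin r → R) K
  have key : ∀ n : ℕ, (I ^ (n + c) • ⊤ : Submodule R ((Fin r → R) ⊗[R] F)) ⊓ KF ≤
      Submodule.map ρF (I ^ n • ⊤ : Submodule R ((Fin s → R) ⊗[R] F)) := by
    intro n
    have h1 : (I ^ (n + c) • ⊤ : Submodule R ((Fin r → R) ⊗[R] F)) ⊓ KF =
        LinearMap.range (LinearMap.rTensor F
          ((I ^ (n + c) • ⊤ : Submodule R (Fin r → R))).subtype) ⊓ KF := by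
      rw [range_rTensor_smul_top]
    have h2 := range_rTensor_inf_le F ((I ^ (n + c) • ⊤ : Submodule R (Fin r → R))) K
    have h3 : (I ^ (n + c) • ⊤ : Submodule R (Fin r → R)) ⊓ K ≤ I ^ n • K := by
      rw [hc (n + c) (by omega), show n + c - c = n by omega]
      exact Submodule.smul_mono le_rfl inf_le_right
    have h4 := range_rTensor_le_smul F (I ^ n) K _ h3
    have h5 : I ^ n • KF = Submodule.map ρF (I ^ n • ⊤ : Submodule R ((Fin s → R) ⊗[R] F)) := by
      rw [Submodule.map_smul'', Submodule.map_top, hrangeρ]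
    rw [h1, ← h5]
    exact le_trans (le_trans h2 h4) le_rfl
  -- the closedness statement
  have closed : ∀ y : (Fin r → R) ⊗[R] F,
      (∀ n : ℕ, y ∈ KF ⊔ (I ^ n • ⊤ : Submodule R ((Fin r → R) ⊗[R] F))) → y ∈ KF := by
    intro y hy
    have hbase : ∃ u : (Fin s → R) ⊗[R] F,
        y - ρF u ∈ (I ^ (0 + c) • ⊤ : Submodule R ((Fin r → R) ⊗[R] F)) := by
      obtain ⟨k, hk, e, he, hye⟩ := Submodule.mem_sup.mp (hy c)
      rw [← hrangeρ] at hk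
      obtain ⟨v, hv⟩ := hk
      refine ⟨v, ?_⟩
      rw [hv, show y - k = e by rw [← hye]; abel]
      simpa using he
    have step : ∀ (n : ℕ) (u : (Fin s → R) ⊗[R] F),
        y - ρF u ∈ (I ^ (n + c) • ⊤ : Submodule R ((Fin r → R) ⊗[R] F)) →
        ∃ u' : (Fin s → R) ⊗[R] F,
          (y - ρF u' ∈ (I ^ (n + 1 + c) • ⊤ : Submodule R ((Fin r → R) ⊗[R] F))) ∧
          u' - u ∈ (I ^ n • ⊤ : Submodule R ((Fin s → R) ⊗[R] F)) := by
      intro n u hu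
      obtain ⟨k, hk, e, he, hye⟩ := Submodule.mem_sup.mp (hy (n + 1 + c))
      rw [← hrangeρ] at hk
      obtain ⟨v, hv⟩ := hk
      have hev : y - ρF v = e := by rw [hv, show y - k = e by rw [← hye]; abel]
      have h1 : ρF u - ρF v ∈ (I ^ (n + c) • ⊤ : Submodule R ((Fin r → R) ⊗[R] F)) := by
        have heq : ρF u - ρF v = (y - ρF v) - (y - ρF u) := by abel
        rw [heq, hev]
        refine Submodule.sub_mem _ ?_ hu
        have hle : (I ^ (n + 1 + c) : Ideal R) ≤ I ^ (n + c) :=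
          Ideal.pow_le_pow_right (by omega)
        exact Submodule.smul_mono_left hle he
      have h2 : ρF u - ρF v ∈ KF := by
        rw [← hrangeρ, ← map_sub]
        exact LinearMap.mem_range_self _ _
      obtain ⟨w, hw, hww⟩ := key n ⟨h1, h2⟩
      refine ⟨u - w, ?_, ?_⟩
      · have heq2 : y - ρF (u - w) = y - ρF v := by
          rw [map_sub, hww]; abel
        rw [heq2, hev]
        exact he
      · rw [show u - w - u = -w by abel]
        exact Submodule.neg_mem _ hw
    -- build the approximating sequence
    obtain ⟨u0, hu0⟩ := hbase
    let U : ∀ n : ℕ, {u : (Fin s → R) ⊗[R] F //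
        y - ρF u ∈ (I ^ (n + c) • ⊤ : Submodule R ((Fin r → R) ⊗[R] F))} :=
      fun n => Nat.rec ⟨u0, hu0⟩ (fun n Un =>
        ⟨Classical.choose (step n Un.1 Un.2),
         (Classical.choose_spec (step n Un.1 Un.2)).1⟩) n
    have hdiff : ∀ n : ℕ, (U (n + 1)).1 - (U n).1 ∈
        (I ^ n • ⊤ : Submodule R ((Fin s → R) ⊗[R] F)) :=
      fun n => (Classical.choose_spec (step n (U n).1 (U n).2)).2
    have hcauchy : ∀ m n : ℕ, m ≤ n → (U n).1 - (U m).1 ∈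
        (I ^ m • ⊤ : Submodule R ((Fin s → R) ⊗[R] F)) := by
      intro m n hmn
      induction n, hmn using Nat.le_induction with
      | base => rw [sub_self]; exact Submodule.zero_mem _
      | succ n hmn ih =>
        have h1 := hdiff n
        have h2 : (U (n + 1)).1 - (U m).1 =
            ((U (n + 1)).1 - (U n).1) + ((U n).1 - (U m).1) := by abel
        rw [h2]
        refine Submodule.add_mem _ ?_ ih
        exact Submodule.smul_mono_left (Ideal.pow_le_pow_right hmn) h1
    have hpreS : IsPrecomplete I ((Fin s → R) ⊗[R] F) :=
      (isAdicComplete_finTensor I F s).toIsPrecomplete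
    obtain ⟨u, hu⟩ := hpreS.prec (f := fun n => (U n).1) (by
      intro m n hmn
      rw [SModEq.sub_mem, show (U m).1 - (U n).1 = -((U n).1 - (U m).1) by abel]
      exact Submodule.neg_mem _ (hcauchy m n hmn))
    have hfinal : ∀ n : ℕ, y - ρF u ∈ (I ^ n • ⊤ : Submodule R ((Fin r → R) ⊗[R] F)) := by
      intro n
      have hle : (I ^ (n + c) : Ideal R) ≤ I ^ n := Ideal.pow_le_pow_right (by omega)
      have h1 : y - ρF (U n).1 ∈ (I ^ n • ⊤ : Submodule R ((Fin r → R) ⊗[R] F)) :=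
        Submodule.smul_mono_left hle (U n).2
      have h2 : (U n).1 - u ∈ (I ^ n • ⊤ : Submodule R ((Fin s → R) ⊗[R] F)) :=
        SModEq.sub_mem.mp (hu n)
      have h3 := mem_smul_top_of_map ρF (I ^ n) h2
      have h4 : y - ρF u = (y - ρF (U n).1) + ρF ((U n).1 - u) := by
        rw [map_sub]; abel
      rw [h4]
      exact Submodule.add_mem _ h1 h3
    have hhausN : IsHausdorff I ((Fin r → R) ⊗[R] F) :=
      (isAdicComplete_finTensor I F r).toIsHausdorff
    have hy0 : y - ρF u = 0 :=
      hhausN.haus _ (fun n => SModEq.zero.mpr (hfinal n))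
    have : y = ρF u := by rw [← sub_eq_zero]; exact hy0
    rw [this, ← hrangeρ]
    exact LinearMap.mem_range_self _ _
  -- conclude
  constructor
  intro z hz
  obtain ⟨y, rfl⟩ := hπF_surj z
  have hmem : ∀ n : ℕ, y ∈ KF ⊔ (I ^ n • ⊤ : Submodule R ((Fin r → R) ⊗[R] F)) := by
    intro n
    have h1 : πF y ∈ (I ^ n • ⊤ : Submodule R (X ⊗[R] F)) := SModEq.zero.mp (hz n)
    have h2 : (I ^ n • ⊤ : Submodule R (X ⊗[R] F)) =
        Submodule.map πF (I ^ n • ⊤ : Submodule R ((Fin r → R) ⊗[R] F)) := by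
      rw [Submodule.map_smul'', Submodule.map_top, LinearMap.range_eq_top.mpr hπF_surj]
    rw [h2] at h1
    obtain ⟨y', hy', hyy⟩ := h1
    have : y - y' ∈ KF := by
      rw [← hker, LinearMap.mem_ker, map_sub, hyy, sub_self]
    refine Submodule.mem_sup.mpr ⟨y - y', this, y', hy', by abel⟩
  have := closed y hmem
  rw [← hker] at this
  exact this

end Main

section PartA

variable {X : Type w} [AddCommGroup X] [Module R X]
variable {M' : Type v} [AddCommGroup M'] [Module R M']

theorem range_lTensor_le_smul_top (J : Ideal R) :
    LinearMap.range (LinearMap.lTensor X ((J • ⊤ : Submodule R M').subtype)) ≤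
      (J • ⊤ : Submodule R (X ⊗[R] M')) := by
  rintro _ ⟨t, rfl⟩
  induction t using TensorProduct.induction_on with
  | zero => rw [map_zero]; exact Submodule.zero_mem _
  | tmul x p =>
    rw [LinearMap.lTensor_tmul]
    refine Submodule.smul_induction_on
      (p := fun y => x ⊗ₜ[R] y ∈ (J • ⊤ : Submodule R (X ⊗[R] M'))) p.2 ?_ ?_
    · intro r hr m _
      rw [TensorProduct.tmul_smul]
      exact Submodule.smul_mem_smul hr Submodule.mem_top
    · intro a b ha hb
      rw [TensorProduct.tmul_add]
      exact Submodule.add_mem _ ha hb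
  | add a b ha hb => rw [map_add]; exact Submodule.add_mem _ ha hb

/-- If `X ⊗ M` is separated, then `X ⊗ M → X ⊗ M̂` is injective. -/
theorem injective_lTensor_of_isHausdorff (hH : IsHausdorff I (X ⊗[R] M))
    (z : X ⊗[R] M) (hz : LinearMap.lTensor X (AdicCompletion.of I M) z = 0) : z = 0 := by
  apply hH.haus
  intro n
  rw [SModEq.zero]
  -- z is killed by lTensor X (mkQ (I^n • ⊤))
  have h1 : LinearMap.lTensor X (Submodule.mkQ (I ^ n • ⊤ : Submodule R M)) z = 0 := by
    rw [← AdicCompletion.eval_comp_of, LinearMap.lTensor_comp, LinearMap.comp_apply, hz,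
      map_zero]
  have hex : Function.Exact
      (LinearMap.lTensor X (I ^ n • ⊤ : Submodule R M).subtype)
      (LinearMap.lTensor X (Submodule.mkQ (I ^ n • ⊤ : Submodule R M))) :=
    lTensor_exact X (LinearMap.exact_subtype_mkQ (I ^ n • ⊤ : Submodule R M))
      (Submodule.mkQ_surjective _)
  have h2 := (hex z).mp h1
  exact range_lTensor_le_smul_top (I ^ n) h2

end PartA

section PartD

variable {B : Type x} [AddCommGroup B] [Module R B]

/-- Injectivity of `lTensor` transfers along a linear equivalence in the first factor. -/
theorem injective_lTensor_of_equiv {C : Type*} {D : Type*} [AddCommGroup C] [Module R C]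
    [AddCommGroup D] [Module R D] (e : C ≃ₗ[R] D) (f : M →ₗ[R] B)
    (h : Function.Injective (LinearMap.lTensor D f)) :
    Function.Injective (LinearMap.lTensor C f) := by
  have hinj : Function.Injective (LinearMap.rTensor M e.toLinearMap) := by
    intro a b hab
    have h1 : ∀ z : C ⊗[R] M,
        LinearMap.rTensor M e.symm.toLinearMap (LinearMap.rTensor M e.toLinearMap z) = z := by
      intro z
      rw [← LinearMap.comp_apply, ← LinearMap.rTensor_comp]
      have : e.symm.toLinearMap ∘ₗ e.toLinearMap = LinearMap.id := by
        ext c; simp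
      rw [this, LinearMap.rTensor_id, LinearMap.id_apply]
    rw [← h1 a, hab, h1 b]
  intro a b hab
  apply hinj
  have hnat : LinearMap.lTensor D f ∘ₗ LinearMap.rTensor M e.toLinearMap =
      LinearMap.rTensor B e.toLinearMap ∘ₗ LinearMap.lTensor C f := by
    rw [LinearMap.lTensor_comp_rTensor, LinearMap.rTensor_comp_lTensor]
  apply h
  have key : ∀ z : C ⊗[R] M, LinearMap.lTensor D f (LinearMap.rTensor M e.toLinearMap z) =
      LinearMap.rTensor B e.toLinearMap (LinearMap.lTensor C f z) := fun z => by
    rw [← LinearMap.comp_apply, hnat, LinearMap.comp_apply]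
  rw [key a, key b, hab]

/-- Subsingleton tensor. -/
theorem lTensor_injective_of_subsingleton {C : Type*} [AddCommGroup C] [Module R C]
    [Subsingleton C] (f : M →ₗ[R] B) : Function.Injective (LinearMap.lTensor C f) := by
  have haux : ∀ z : C ⊗[R] M, z = 0 := by
    intro z
    induction z using TensorProduct.induction_on with
    | zero => rfl
    | tmul c m =>
      have hc : c = 0 := Subsingleton.elim c 0
      rw [hc, TensorProduct.zero_tmul]
    | add a b ha hb => rw [ha, hb, add_zero]
  intro a b _
  rw [haux a, haux b]

/-- The main dévissage: if `R ⧸ p ⊗ f` is injective for all primes `p`, and the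
codomain of `f` is flat, then `X ⊗ f` is injective for all finite `X`. -/
theorem injective_lTensor_of_primes [IsNoetherianRing R] [Module.Flat R B]
    (f : M →ₗ[R] B)
    (hprime : ∀ p : Ideal R, p.IsPrime →
      Function.Injective (LinearMap.lTensor (R ⧸ p) f))
    (X : Type y) [AddCommGroup X] [Module R X] (hX : Module.Finite R X) :
    Function.Injective (LinearMap.lTensor X f) := by
  haveI := hX
  set S : Set (Submodule R X) := {N | Function.Injective (LinearMap.lTensor ↥N f)} with hS
  have hbot : (⊥ : Submodule R X) ∈ S := lTensor_injective_of_subsingleton M f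
  obtain ⟨N, hNS, hNmax⟩ :=
    (set_has_maximal_iff_noetherian.mpr (inferInstance : IsNoetherian R X)) S ⟨⊥, hbot⟩
  have hNtop : N = ⊤ := by
    by_contra hne
    haveI : Nontrivial (X ⧸ N) :=
      Submodule.Quotient.nontrivial_iff.mpr hne
    obtain ⟨p, hpA⟩ := associatedPrimes.nonempty R (X ⧸ N)
    obtain ⟨hpprime, xbar, hxann⟩ := isAssociatedPrime_iff.mp hpA
    set g0 : R →ₗ[R] X ⧸ N := LinearMap.toSpanSingleton R (X ⧸ N) xbar with hg0
    have hkerg0 : LinearMap.ker g0 = p := by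
      ext r
      rw [LinearMap.mem_ker, hg0, LinearMap.toSpanSingleton_apply, hxann,
        Submodule.mem_colon_singleton, Submodule.mem_bot]
    have hxbar_ne : xbar ≠ 0 := by
      intro h0
      apply hpprime.ne_top
      rw [hxann, h0]
      rw [eq_top_iff]
      intro r _
      rw [Submodule.mem_colon_singleton, smul_zero, Submodule.mem_bot]
    set N' : Submodule R X := Submodule.comap N.mkQ (LinearMap.range g0) with hN'
    have hNN' : N ≤ N' := by
      intro x hx
      rw [hN', Submodule.mem_comap]
      have : N.mkQ x = 0 := by rwa [Submodule.mkQ_apply, Submodule.Quotient.mk_eq_zero]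
      rw [this]
      exact Submodule.zero_mem _
    have hlt : N < N' := by
      obtain ⟨x, hx⟩ := Submodule.mkQ_surjective N xbar
      refine lt_of_le_of_ne hNN' fun heq => ?_
      have hxN' : x ∈ N' := by
        rw [hN', Submodule.mem_comap, hx]
        exact ⟨1, by rw [hg0, LinearMap.toSpanSingleton_apply, one_smul]⟩
      rw [← heq] at hxN'
      apply hxbar_ne
      rw [← hx, Submodule.mkQ_apply, Submodule.Quotient.mk_eq_zero]
      exact hxN'
    -- the quotient N' / N is isomorphic to R ⧸ p
    set ι : ↥N →ₗ[R] ↥N' := Submodule.inclusion hNN' with hι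
    set W : Submodule R ↥N' := Submodule.comap N'.subtype N with hW
    have hrangeι : LinearMap.range ι = W := Submodule.range_inclusion N N' hNN'
    have hexact : Function.Exact ι W.mkQ := by
      rw [LinearMap.exact_iff, Submodule.ker_mkQ, hrangeι]
    set h : ↥N' →ₗ[R] X ⧸ N := N.mkQ ∘ₗ N'.subtype with hh
    have hkerh : LinearMap.ker h = W := by
      ext c
      rw [LinearMap.mem_ker, hh, LinearMap.comp_apply, hW, Submodule.mem_comap,
        Submodule.mkQ_apply, Submodule.Quotient.mk_eq_zero]
    have hrangeh : LinearMap.range h = LinearMap.range g0 := by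
      apply le_antisymm
      · rintro _ ⟨c, rfl⟩
        exact Submodule.mem_comap.mp c.2
      · rintro _ ⟨r, rfl⟩
        obtain ⟨x, hx⟩ := Submodule.mkQ_surjective N (g0 r)
        have hxN' : x ∈ N' := by
          rw [hN', Submodule.mem_comap, hx]
          exact ⟨r, rfl⟩
        exact ⟨⟨x, hxN'⟩, hx⟩
    have eC : (↥N' ⧸ W) ≃ₗ[R] (R ⧸ p) :=
      (Submodule.quotEquivOfEq W (LinearMap.ker h) hkerh.symm) ≪≫ₗ
        h.quotKerEquivRange ≪≫ₗ (LinearEquiv.ofEq _ _ hrangeh) ≪≫ₗ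
        g0.quotKerEquivRange.symm ≪≫ₗ (Submodule.quotEquivOfEq _ _ hkerg0)
    have hC : Function.Injective (LinearMap.lTensor (↥N' ⧸ W) f) :=
      injective_lTensor_of_equiv M eC f (hprime p hpprime)
    -- the diagram chase
    have hN'S : N' ∈ S := by
      rw [hS, Set.mem_setOf_eq, ← LinearMap.ker_eq_bot, eq_bot_iff]
      intro z hz
      rw [LinearMap.mem_ker] at hz
      rw [Submodule.mem_bot]
      have hnat1 : LinearMap.lTensor (↥N' ⧸ W) f ∘ₗ LinearMap.rTensor M W.mkQ =
          LinearMap.rTensor B W.mkQ ∘ₗ LinearMap.lTensor ↥N' f := by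
        rw [LinearMap.lTensor_comp_rTensor, LinearMap.rTensor_comp_lTensor]
      have h1 : LinearMap.lTensor (↥N' ⧸ W) f (LinearMap.rTensor M W.mkQ z) = 0 := by
        rw [← LinearMap.comp_apply, hnat1, LinearMap.comp_apply, hz, map_zero]
      have h2 : LinearMap.rTensor M W.mkQ z = 0 := by
        apply hC
        rw [h1, map_zero]
      have hexT : Function.Exact (LinearMap.rTensor M ι) (LinearMap.rTensor M W.mkQ) :=
        rTensor_exact M hexact (Submodule.mkQ_surjective W)
      obtain ⟨w, hw⟩ := (hexT z).mp h2
      have hnat2 : LinearMap.lTensor ↥N' f ∘ₗ LinearMap.rTensor M ι =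
          LinearMap.rTensor B ι ∘ₗ LinearMap.lTensor ↥N f := by
        rw [LinearMap.lTensor_comp_rTensor, LinearMap.rTensor_comp_lTensor]
      have h3 : LinearMap.rTensor B ι (LinearMap.lTensor ↥N f w) = 0 := by
        rw [← LinearMap.comp_apply, ← hnat2, LinearMap.comp_apply, hw, hz]
      have hιinj : Function.Injective (LinearMap.rTensor B ι) :=
        Module.Flat.rTensor_preserves_injective_linearMap ι (Submodule.inclusion_injective hNN')
      have h4 : LinearMap.lTensor ↥N f w = 0 := by
        apply hιinj
        rw [h3, map_zero]
      have h5 : w = 0 := by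
        apply hNS
        rw [h4, map_zero]
      rw [← hw, h5, map_zero]
    exact hNmax N' hN'S hlt
  subst hNtop
  exact injective_lTensor_of_equiv M Submodule.topEquiv.symm f hNS

/-- γ-injectivity: if `M ⧸ pM` is separated then `(R⧸p) ⊗ M → (R⧸p) ⊗ M̂` is injective. -/
theorem injective_lTensor_quot_of (p : Ideal R)
    (hp : IsHausdorff I (M ⧸ (p • ⊤ : Submodule R M))) :
    Function.Injective (LinearMap.lTensor (R ⧸ p) (AdicCompletion.of I M)) := by
  set Mh := AdicCompletion I M with hMh
  set e₁ := quotTensorEquivQuotSMul M p with he₁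
  set e₂ := quotTensorEquivQuotSMul Mh p with he₂
  have hle : (p • ⊤ : Submodule R M) ≤
      Submodule.comap (AdicCompletion.of I M) (p • ⊤ : Submodule R Mh) := by
    intro x hx
    rw [Submodule.mem_comap]
    exact mem_smul_top_of_map (AdicCompletion.of I M) p hx
  set φ := Submodule.mapQ _ _ (AdicCompletion.of I M) hle with hφ
  have hsqmap : (e₂ : (R ⧸ p) ⊗[R] Mh →ₗ[R] Mh ⧸ (p • ⊤ : Submodule R Mh)) ∘ₗ
      LinearMap.lTensor (R ⧸ p) (AdicCompletion.of I M) =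
      φ ∘ₗ (e₁ : (R ⧸ p) ⊗[R] M →ₗ[R] M ⧸ (p • ⊤ : Submodule R M)) := by
    apply TensorProduct.ext'
    intro x m
    obtain ⟨r, rfl⟩ := Ideal.Quotient.mk_surjective x
    simp only [LinearMap.comp_apply, LinearEquiv.coe_coe, LinearMap.lTensor_tmul]
    rw [he₂, he₁, quotTensorEquivQuotSMul_mk_tmul, quotTensorEquivQuotSMul_mk_tmul, hφ,
      Submodule.mapQ_apply, map_smul]
  have hsq : ∀ z : (R ⧸ p) ⊗[R] M,
      e₂ (LinearMap.lTensor (R ⧸ p) (AdicCompletion.of I M) z) = φ (e₁ z) := by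
    intro z
    exact LinearMap.congr_fun hsqmap z
  have hφinj : Function.Injective φ := by
    rw [← LinearMap.ker_eq_bot, eq_bot_iff]
    intro xq hxq
    obtain ⟨x, rfl⟩ := Submodule.mkQ_surjective _ xq
    rw [LinearMap.mem_ker, hφ, Submodule.mkQ_apply, Submodule.mapQ_apply,
      Submodule.Quotient.mk_eq_zero] at hxq
    -- hxq : of x ∈ p • ⊤ Mh
    rw [Submodule.mem_bot, Submodule.mkQ_apply, Submodule.Quotient.mk_eq_zero]
    have hx' : ∀ n : ℕ, (Submodule.Quotient.mk x : M ⧸ (p • ⊤ : Submodule R M)) ∈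
        (I ^ n • ⊤ : Submodule R (M ⧸ (p • ⊤ : Submodule R M))) := by
      intro n
      have h1 := mem_smul_top_of_map (AdicCompletion.eval I M n) p hxq
      rw [AdicCompletion.eval_of] at h1
      have h2 : (p • ⊤ : Submodule R (M ⧸ (I ^ n • ⊤ : Submodule R M))) =
          Submodule.map (Submodule.mkQ (I ^ n • ⊤ : Submodule R M))
            (p • ⊤ : Submodule R M) := by
        rw [Submodule.map_smul'', Submodule.map_top, Submodule.range_mkQ]
      rw [h2] at h1
      obtain ⟨m, hm, hmx⟩ := h1
      have h3 : x - m ∈ (I ^ n • ⊤ : Submodule R M) := by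
        rw [← Submodule.Quotient.eq]
        rw [Submodule.mkQ_apply] at hmx
        exact hmx.symm
      have h4 : (Submodule.Quotient.mk x : M ⧸ (p • ⊤ : Submodule R M)) =
          Submodule.Quotient.mk (x - m) := by
        rw [Submodule.Quotient.eq]
        simpa using hm
      rw [h4]
      have h5 := mem_smul_top_of_map (Submodule.mkQ (p • ⊤ : Submodule R M)) (I ^ n) h3
      rwa [Submodule.mkQ_apply] at h5
    have := hp.haus (Submodule.Quotient.mk x) (fun n => SModEq.zero.mpr (hx' n))
    rwa [Submodule.Quotient.mk_eq_zero] at this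
  intro a b hab
  apply e₁.injective
  apply hφinj
  rw [← hsq, ← hsq, hab]

end PartD

end TotSepAux


theorem totallySeparated_tfae_of_flat_completion
    (R : Type u) [CommRing R] [IsNoetherianRing R] [IsLocalRing R]
    (M : Type v) [AddCommGroup M] [Module R M]
    [IsHausdorff (maximalIdeal R) M]
    (hflat : Module.Flat R (AdicCompletion (maximalIdeal R) M)) :
    (TotallySeparated R M ↔
      ∀ p : Ideal R, p.IsPrime →
        IsHausdorff (maximalIdeal R) (M ⧸ (p • ⊤ : Submodule R M))) ∧
    (TotallySeparated R M ↔ IsPureMap (AdicCompletion.of (maximalIdeal R) M)) := by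
  haveI := hflat
  haveI : IsAdicComplete (maximalIdeal R) (AdicCompletion (maximalIdeal R) M) :=
    TotSepAux.adicCompletion_isAdicComplete (maximalIdeal R) M
  -- (iii) ⇒ (i)
  have h31 : IsPureMap (AdicCompletion.of (maximalIdeal R) M) → TotallySeparated R M := by
    intro hpure X _ _ hX
    haveI := hX
    have hH : IsHausdorff (maximalIdeal R) (X ⊗[R] AdicCompletion (maximalIdeal R) M) :=
      TotSepAux.isHausdorff_tensor_of_flat_of_complete (maximalIdeal R)
        (AdicCompletion (maximalIdeal R) M) X
    exact TotSepAux.isHausdorff_of_injective (maximalIdeal R) _ (hpure X hX) hH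
  -- (i) ⇒ (iii)
  have h13 : TotallySeparated R M → IsPureMap (AdicCompletion.of (maximalIdeal R) M) := by
    intro hts X _ _ hX
    intro a b hab
    have hz : LinearMap.lTensor X (AdicCompletion.of (maximalIdeal R) M) (a - b) = 0 := by
      rw [map_sub, hab, sub_self]
    have h0 := TotSepAux.injective_lTensor_of_isHausdorff (maximalIdeal R) M
      (hts X hX) (a - b) hz
    exact sub_eq_zero.mp h0
  -- (i) ⇒ (ii)
  have h12 : TotallySeparated R M →
      (∀ p : Ideal R, p.IsPrime →
        IsHausdorff (maximalIdeal R) (M ⧸ (p • ⊤ : Submodule R M))) := by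
    intro hts p _
    haveI : Module.Finite R (R ⧸ p) :=
      Module.Finite.of_surjective (Submodule.mkQ (p : Submodule R R))
        (Submodule.mkQ_surjective _)
    have h := hts (R ⧸ p) inferInstance
    exact TotSepAux.isHausdorff_of_linearEquiv (maximalIdeal R)
      (quotTensorEquivQuotSMul M p) h
  -- (ii) ⇒ (iii)
  have h23 : (∀ p : Ideal R, p.IsPrime →
      IsHausdorff (maximalIdeal R) (M ⧸ (p • ⊤ : Submodule R M))) →
      IsPureMap (AdicCompletion.of (maximalIdeal R) M) := by
    intro hsep X _ _ hX
    exact TotSepAux.injective_lTensor_of_primes M (AdicCompletion.of (maximalIdeal R) M)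
      (fun p hp => TotSepAux.injective_lTensor_quot_of (maximalIdeal R) M p (hsep p hp)) X hX
  exact ⟨⟨h12, fun h => h31 (h23 h)⟩, ⟨h13, h31⟩⟩
end
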